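/- arXiv:2202.11398 — 4 statements merged into one kernel-verified Lean document; each statement's English description precedes it below -/
import Mathlib

section
/- Let S ⊆ Dic(A,y) with 1 ∉ S, S⁻¹ = S and ⟨S⟩ = Dic(A,y), written S = S₁ ∪ xS₂ with S₁, S₂ ⊆ A, and let D be a non-empty finite set of positive integers. Assume S₁ ∈ B(A) and S₂ ∈ B(A). Then there exist subsets S₁^D, S₂^D of A such that, setting S^D = S₁^D ∪ xS₂^D: 1 ∉ S^D, (S^D)⁻¹ = S^D, and the distance power Cay(Dic(A,y), S)^D equals Cay(Dic(A,y), S^D). Moreover Cay(Dic(A,y), S)^D is integral and (S₂^D)⁻¹ = S₂^D; and if 1 ∈ D, then Cay(Dic(A,y), S)^D is connected. -/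
open scoped Classical Pointwise

/-- The generalized dicyclic group `Dic(A, y)` where `y : A` satisfies `y * y = 1`.
The element `⟨t, a⟩` represents `x^t * a`, where `x` is the extra generator with
`x ^ 2 = y` and `x * a * x⁻¹ = a⁻¹` for all `a ∈ A`. -/
@[ext]
structure Dic (A : Type*) [CommGroup A] (y : A) (hy : y * y = 1) where
  t : Bool
  a : A

namespace Dic

variable {A : Type*} [CommGroup A] {y : A} {hy : y * y = 1}

instance : Mul (Dic A y hy) :=
  ⟨fun g h => ⟨xor g.t h.t, (if h.t then g.a⁻¹ else g.a) * h.a * (if g.t && h.t then y else 1)⟩⟩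

instance : One (Dic A y hy) := ⟨⟨false, 1⟩⟩

instance : Inv (Dic A y hy) := ⟨fun g => ⟨g.t, if g.t then y * g.a else g.a⁻¹⟩⟩

@[simp] lemma mul_t (g h : Dic A y hy) : (g * h).t = xor g.t h.t := rfl
@[simp] lemma mul_a (g h : Dic A y hy) :
    (g * h).a = (if h.t then g.a⁻¹ else g.a) * h.a * (if g.t && h.t then y else 1) := rfl
@[simp] lemma one_t : (1 : Dic A y hy).t = false := rfl
@[simp] lemma one_a : (1 : Dic A y hy).a = 1 := rfl
@[simp] lemma inv_t (g : Dic A y hy) : g⁻¹.t = g.t := rfl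
@[simp] lemma inv_a (g : Dic A y hy) : g⁻¹.a = if g.t then y * g.a else g.a⁻¹ := rfl

instance : Group (Dic A y hy) where
  mul_assoc g₁ g₂ g₃ := by
    have hyi : y⁻¹ = y := inv_eq_of_mul_eq_one_right hy
    ext
    · cases g₁.t <;> cases g₂.t <;> cases g₃.t <;> simp
    · cases h₁ : g₁.t <;> cases h₂ : g₂.t <;> cases h₃ : g₃.t <;>
        simp [h₁, h₂, h₃, hyi, mul_inv_rev, mul_comm, mul_assoc, mul_left_comm]
  one_mul g := by ext <;> simp
  mul_one g := by ext <;> simp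
  inv_mul_cancel g := by
    ext
    · simp
    · cases h : g.t <;> simp [h, mul_inv_rev, mul_comm, mul_assoc, mul_left_comm]

/-- The canonical embedding of `A` into `Dic A y hy`. -/
def ofA (a : A) : Dic A y hy := ⟨false, a⟩

/-- The extra generator `x` of `Dic A y hy`, satisfying `x ^ 2 = y`. -/
def x (A : Type*) [CommGroup A] (y : A) (hy : y * y = 1) : Dic A y hy := ⟨true, 1⟩

instance [Fintype A] : Fintype (Dic A y hy) :=
  Fintype.ofEquiv (Bool × A)
    { toFun := fun p => ⟨p.1, p.2⟩
      invFun := fun g => (g.t, g.a)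
      left_inv := fun _ => rfl
      right_inv := fun _ => rfl }

end Dic

/-- The Cayley graph of a group `G` with respect to a connection set `S`.  When `1 ∉ S` and
`S⁻¹ = S`, two vertices `g h` are adjacent if and only if `g⁻¹ * h ∈ S`. -/
def cayley {G : Type*} [Group G] (S : Set G) : SimpleGraph G :=
  SimpleGraph.fromRel fun g h => g⁻¹ * h ∈ S

/-- A graph on a finite vertex set is integral if all eigenvalues of its adjacency matrix
are integers. -/
noncomputable def IsIntegralGraph {V : Type*} [Fintype V] (Γ : SimpleGraph V) : Prop :=
  ∀ μ ∈ spectrum ℝ (Γ.adjMatrix ℝ), ∃ k : ℤ, (k : ℝ) = μ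

/-- The distance matrix of a graph on a finite vertex set. -/
noncomputable def distMatrix {V : Type*} [Fintype V] (Γ : SimpleGraph V) : Matrix V V ℝ :=
  Matrix.of fun v w => (Γ.dist v w : ℝ)

/-- A (connected) graph on a finite vertex set is distance integral if all eigenvalues of its
distance matrix are integers. -/
noncomputable def IsDistanceIntegral {V : Type*} [Fintype V] (Γ : SimpleGraph V) : Prop :=
  ∀ μ ∈ spectrum ℝ (distMatrix Γ), ∃ k : ℤ, (k : ℝ) = μ

/-- The Boolean algebra `B(A)` of a group `A`: the collection of subsets of `A` generated by
the subgroups of `A` under finite intersections, unions, and complements. -/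
inductive InBoolAlg (A : Type*) [Group A] : Set A → Prop
  | subgroup (H : Subgroup A) : InBoolAlg A (H : Set A)
  | compl {s : Set A} : InBoolAlg A s → InBoolAlg A sᶜ
  | union {s t : Set A} : InBoolAlg A s → InBoolAlg A t → InBoolAlg A (s ∪ t)
  | inter {s t : Set A} : InBoolAlg A s → InBoolAlg A t → InBoolAlg A (s ∩ t)

/-- `mulPow S n = S^(n)`, the set of products of `n` elements of `S` (`S^(0) = {1}`). -/
def mulPow {G : Type*} [Monoid G] (S : Set G) (n : ℕ) : Set G :=
  {g | ∃ l : List G, l.length = n ∧ (∀ u ∈ l, u ∈ S) ∧ l.prod = g}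

/-- `wordLen S g = ℓ_S(g)`: `0` if `g = 1`, and otherwise the least `n ≥ 1` such that `g` is a
product of `n` elements of `S`. -/
noncomputable def wordLen {G : Type*} [Group G] (S : Set G) (g : G) : ℕ :=
  if g = 1 then 0 else sInf {n : ℕ | g ∈ mulPow S n}

/-- The distance power `Γ^D`: two distinct vertices are adjacent iff their distance in `Γ`
belongs to `D`. -/
def distPower {V : Type*} (Γ : SimpleGraph V) (D : Finset ℕ) : SimpleGraph V where
  Adj v w := v ≠ w ∧ Γ.dist v w ∈ D
  symm := ⟨fun v w h => ⟨h.1.symm, by rw [SimpleGraph.dist_comm]; exact h.2⟩⟩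
  loopless := ⟨fun v h => h.1 rfl⟩

/-- A multiset `(A, f)` lies in `C(A)` iff `f` is constant on each atom
`[a] = {b : ⟨b⟩ = ⟨a⟩}`. -/
def InCA {A : Type*} [Group A] (f : A → ℕ) : Prop :=
  ∀ a b : A, Subgroup.zpowers a = Subgroup.zpowers b → f a = f b

/-- The two-dimensional representation `R_π` of `Dic A y hy` induced by a one-dimensional
representation `π` of `A`:  `R_π(x) = [[0, π y], [1, 0]]` and `R_π(a) = diag(π a, π a⁻¹)`. -/
noncomputable def Rpi {A : Type*} [CommGroup A] {y : A} {hy : y * y = 1}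
    (π : A →* ℂ) (g : Dic A y hy) : Matrix (Fin 2) (Fin 2) ℂ :=
  (if g.t then !![0, π y; 1, 0] else 1) * !![π g.a, 0; 0, π g.a⁻¹]

/-- The complex-conjugate of a one-dimensional representation. -/
def conjHom {A : Type*} [CommGroup A] (π : A →* ℂ) : A →* ℂ :=
  (starRingEnd ℂ).toMonoidHom.comp π

/- ===================== Auxiliary development ===================== -/

section GraphAux

open SimpleGraph

variable {V W : Type*} {G : SimpleGraph V} {H : SimpleGraph W}

lemma iso_dist_le (φ : G ≃g H) (u v : V) : H.dist (φ u) (φ v) ≤ G.dist u v := by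
  by_cases hr : G.Reachable u v
  · obtain ⟨p, hp⟩ := hr.exists_walk_length_eq_dist
    calc H.dist (φ u) (φ v) ≤ (p.map φ.toHom).length := SimpleGraph.dist_le _
      _ = G.dist u v := by rw [SimpleGraph.Walk.length_map, hp]
  · have h2 : ¬ H.Reachable (φ u) (φ v) := fun h => hr (by simpa using h.map φ.symm.toHom)
    rw [SimpleGraph.dist_eq_zero_of_not_reachable h2,
      SimpleGraph.dist_eq_zero_of_not_reachable hr]

lemma iso_dist (φ : G ≃g H) (u v : V) : H.dist (φ u) (φ v) = G.dist u v :=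
  le_antisymm (iso_dist_le φ u v) (by simpa using iso_dist_le φ.symm (φ u) (φ v))

end GraphAux

section CayleyAux

variable {Gp : Type*} [Group Gp]

lemma cayley_adj (T : Set Gp) (g h : Gp) :
    (cayley T).Adj g h ↔ g ≠ h ∧ (g⁻¹ * h ∈ T ∨ h⁻¹ * g ∈ T) := by
  simp [cayley, SimpleGraph.fromRel_adj]

/-- A bijection compatible with the connection set induces a graph automorphism. -/
def cayleyIso (T : Set Gp) (e : Gp ≃ Gp)
    (he : ∀ g h : Gp, (e g)⁻¹ * e h ∈ T ↔ g⁻¹ * h ∈ T) : cayley T ≃g cayley T where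
  toEquiv := e
  map_rel_iff' := by
    intro g h
    simp only [cayley_adj, he, e.injective.ne_iff]

/-- Left translation as an automorphism of a Cayley graph. -/
def cayleyTrans (T : Set Gp) (k : Gp) : cayley T ≃g cayley T :=
  cayleyIso T (Equiv.mulLeft k) (by
    intro g h
    simp [mul_assoc])

@[simp] lemma cayleyTrans_apply (T : Set Gp) (k g : Gp) : cayleyTrans T k g = k * g := rfl

lemma cayley_dist_eq (T : Set Gp) (v w : Gp) :
    (cayley T).dist v w = (cayley T).dist 1 (v⁻¹ * w) := by
  have h := iso_dist (cayleyTrans T v⁻¹) v w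
  simpa using h.symm

lemma cayley_dist_inv (T : Set Gp) (g : Gp) :
    (cayley T).dist 1 g⁻¹ = (cayley T).dist 1 g := by
  have h := cayley_dist_eq T g 1
  rw [mul_one] at h
  rw [← h, SimpleGraph.dist_comm]

lemma cayley_connected {T : Set Gp} (h1 : (1 : Gp) ∉ T)
    (hgen : Subgroup.closure T = ⊤) : (cayley T).Connected := by
  have key : ∀ g : Gp, (cayley T).Reachable 1 g := by
    intro g
    let K : Subgroup Gp :=
      { carrier := {g : Gp | (cayley T).Reachable 1 g}
        one_mem' := SimpleGraph.Reachable.refl 1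
        mul_mem' := by
          intro a b ha hb
          have h2 : (cayley T).Reachable (a * 1) (a * b) := hb.map (cayleyTrans T a).toHom
          rw [mul_one] at h2
          exact ha.trans h2
        inv_mem' := by
          intro a ha
          have h2 : (cayley T).Reachable (a⁻¹ * 1) (a⁻¹ * a) := ha.map (cayleyTrans T a⁻¹).toHom
          rw [mul_one, inv_mul_cancel] at h2
          exact h2.symm }
    have hTK : T ⊆ (K : Set Gp) := by
      intro s hs
      have : (cayley T).Adj 1 s := by
        rw [cayley_adj]
        refine ⟨fun h => h1 (h ▸ hs), Or.inl (by simpa using hs)⟩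
      exact this.reachable
    have : g ∈ Subgroup.closure T := by rw [hgen]; trivial
    exact (Subgroup.closure_le K).mpr hTK this
  constructor
  intro u v
  exact (key u).symm.trans (key v)

end CayleyAux

section CharAux

variable {A : Type*} [CommGroup A] [Fintype A]

/-- integers as a subring of ℂ -/
noncomputable def intsC : Subring ℂ := (Int.castRingHom ℂ).range

lemma mem_intsC {c : ℂ} : c ∈ intsC ↔ ∃ z : ℤ, (z : ℂ) = c := by
  simp [intsC, RingHom.mem_range]

lemma char_sum_subgroup (π : A →* ℂ) (H : Subgroup A) :
    (∑ b ∈ Finset.univ.filter (· ∈ H), π b) ∈ intsC := by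
  by_cases hH : ∀ h ∈ H, π h = 1
  · rw [Finset.sum_congr rfl fun b hb => hH b (by simpa using hb)]
    simp only [Finset.sum_const, nsmul_eq_mul, mul_one]
    exact natCast_mem intsC _
  · push_neg at hH
    obtain ⟨h₀, hh₀, hne⟩ := hH
    have key : (∑ b ∈ Finset.univ.filter (· ∈ H), π b) * π h₀
        = ∑ b ∈ Finset.univ.filter (· ∈ H), π b := by
      rw [Finset.sum_mul]
      refine Finset.sum_nbij' (fun b => b * h₀) (fun b => b * h₀⁻¹) ?_ ?_ ?_ ?_ ?_
      · intro b hb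
        simp only [Finset.mem_filter, Finset.mem_univ, true_and] at hb ⊢
        exact mul_mem hb hh₀
      · intro b hb
        simp only [Finset.mem_filter, Finset.mem_univ, true_and] at hb ⊢
        exact mul_mem hb (inv_mem hh₀)
      · intro b _; simp
      · intro b _; simp
      · intro b _; rw [map_mul]
    have : (∑ b ∈ Finset.univ.filter (· ∈ H), π b) * (π h₀ - 1) = 0 := by
      rw [mul_sub, key, mul_one, sub_self]
    rcases mul_eq_zero.mp this with h | h
    · rw [h]; exact zero_mem _
    · exact absurd (by linear_combination h) hne

/-- The "generator class" of `a`: all `b` generating the same cyclic subgroup. -/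
noncomputable def genClass (a : A) : Finset A :=
  Finset.univ.filter fun b => Subgroup.zpowers b = Subgroup.zpowers a

lemma genClass_sum_int (π : A →* ℂ) : ∀ n : ℕ, ∀ a : A, orderOf a ≤ n →
    (∑ b ∈ genClass a, π b) ∈ intsC := by
  intro n
  induction n using Nat.strong_induction_on with
  | _ n ih =>
    intro a ha
    classical
    set Z : Finset A := Finset.univ.filter (· ∈ Subgroup.zpowers a) with hZ
    have hsum : ∑ b ∈ Z, π b = ∑ H ∈ Z.image (fun b => Subgroup.zpowers b),
        ∑ b ∈ Z.filter (fun b => Subgroup.zpowers b = H), π b :=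
      (Finset.sum_fiberwise_of_maps_to (fun b hb => Finset.mem_image_of_mem _ hb) π).symm
    have hfiber : ∀ H ∈ Z.image (fun b => Subgroup.zpowers b),
        ∃ b₀ : A, Z.filter (fun b => Subgroup.zpowers b = H) = genClass b₀ ∧
          Subgroup.zpowers b₀ = H ∧ Subgroup.zpowers b₀ ≤ Subgroup.zpowers a := by
      intro H hH
      obtain ⟨b₀, hb₀Z, hb₀⟩ := Finset.mem_image.mp hH
      refine ⟨b₀, ?_, hb₀, ?_⟩
      · ext b
        simp only [Finset.mem_filter, Finset.mem_univ, true_and, genClass, hZ, ← hb₀]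
        constructor
        · rintro ⟨-, h⟩; exact h
        · intro h
          refine ⟨?_, h⟩
          have : b ∈ Subgroup.zpowers b := Subgroup.mem_zpowers b
          rw [h] at this
          have hb₀a : b₀ ∈ Subgroup.zpowers a := by
            simpa [hZ] using hb₀Z
          exact (Subgroup.zpowers_le.mpr hb₀a) this
      · rw [hb₀]
        rintro c hc
        obtain ⟨b₁, hb₁Z, hb₁⟩ := Finset.mem_image.mp hH
        rw [← hb₁] at hc
        have hb₁a : b₁ ∈ Subgroup.zpowers a := by simpa [hZ] using hb₁Z
        exact (Subgroup.zpowers_le.mpr hb₁a) hc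
    have hmem : Subgroup.zpowers a ∈ Z.image (fun b => Subgroup.zpowers b) := by
      refine Finset.mem_image_of_mem _ ?_
      simp [hZ, Subgroup.mem_zpowers]
    have hZsum : (∑ b ∈ Z, π b) ∈ intsC := char_sum_subgroup π (Subgroup.zpowers a)
    rw [← Finset.add_sum_erase _ _ hmem] at hsum
    have htop : Z.filter (fun b => Subgroup.zpowers b = Subgroup.zpowers a) = genClass a := by
      obtain ⟨b₀, he, hb₀, -⟩ := hfiber _ hmem
      rw [he]
      ext b
      simp [genClass, hb₀]
    have hrest : (∑ H ∈ (Z.image (fun b => Subgroup.zpowers b)).erase (Subgroup.zpowers a),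
        ∑ b ∈ Z.filter (fun b => Subgroup.zpowers b = H), π b) ∈ intsC := by
      refine Subring.sum_mem _ fun H hH => ?_
      obtain ⟨b₀, he, hb₀, hle⟩ := hfiber H (Finset.mem_of_mem_erase hH)
      rw [he]
      have hne : Subgroup.zpowers b₀ ≠ Subgroup.zpowers a := by
        rw [hb₀]; exact Finset.ne_of_mem_erase hH
      have hssub : (Subgroup.zpowers b₀ : Set A) ⊂ (Subgroup.zpowers a : Set A) := by
        refine ⟨SetLike.coe_subset_coe.mpr hle, fun hsub => hne ?_⟩
        exact le_antisymm hle fun c hc => hsub hc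
      have hlt : orderOf b₀ < orderOf a := by
        rw [← Nat.card_zpowers, ← Nat.card_zpowers]
        exact Set.Finite.card_lt_card (Set.toFinite _) hssub
      exact ih (orderOf b₀) (lt_of_lt_of_le hlt ha) b₀ le_rfl
    have : (∑ b ∈ genClass a, π b) ∈ intsC := by
      have hsum2 := hsum
      rw [htop] at hsum2
      have heq : ∑ b ∈ genClass a, π b = (∑ b ∈ Z, π b) -
          (∑ H ∈ (Z.image (fun b => Subgroup.zpowers b)).erase (Subgroup.zpowers a),
            ∑ b ∈ Z.filter (fun b => Subgroup.zpowers b = H), π b) := by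
        rw [hsum2]; ring
      rw [heq]
      exact Subring.sub_mem _ hZsum hrest
    exact this

lemma char_sum_int_of_genclosed (π : A →* ℂ) (T : Set A)
    (hT : ∀ a ∈ T, ∀ b : A, Subgroup.zpowers b = Subgroup.zpowers a → b ∈ T) :
    (∑ b ∈ Finset.univ.filter (· ∈ T), π b) ∈ intsC := by
  classical
  set F : Finset A := Finset.univ.filter (· ∈ T) with hF
  have hsum : ∑ b ∈ F, π b = ∑ H ∈ F.image (fun b => Subgroup.zpowers b),
      ∑ b ∈ F.filter (fun b => Subgroup.zpowers b = H), π b :=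
    (Finset.sum_fiberwise_of_maps_to (fun b hb => Finset.mem_image_of_mem _ hb) π).symm
  rw [hsum]
  refine Subring.sum_mem _ fun H hH => ?_
  obtain ⟨b₀, hb₀F, hb₀⟩ := Finset.mem_image.mp hH
  have hb₀T : b₀ ∈ T := by simpa [hF] using hb₀F
  have he : F.filter (fun b => Subgroup.zpowers b = H) = genClass b₀ := by
    ext b
    simp only [Finset.mem_filter, Finset.mem_univ, true_and, genClass, hF, ← hb₀]
    constructor
    · rintro ⟨-, h⟩; exact h
    · intro h
      exact ⟨by simpa using hT b₀ hb₀T b h, h⟩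
  rw [he]
  exact genClass_sum_int π (orderOf b₀) b₀ le_rfl

lemma exists_char_ne_one {a : A} (ha : a ≠ 1) : ∃ π : A →* ℂ, π a ≠ 1 := by
  haveI : NeZero ((Monoid.exponent A : ℂ)) :=
    ⟨Nat.cast_ne_zero.mpr (Monoid.exponent_ne_zero_of_finite)⟩
  obtain ⟨φ, hφ⟩ := CommGroup.exists_apply_ne_one_of_hasEnoughRootsOfUnity A ℂ ha
  refine ⟨(Units.coeHom ℂ).comp φ, fun h => hφ (Units.ext (by simpa using h))⟩

noncomputable def charSpan (A : Type*) [CommGroup A] : Submodule ℂ (A → ℂ) :=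
  Submodule.span ℂ (Set.range fun π : A →* ℂ => (π : A → ℂ))

omit [Fintype A] in
lemma char_mem_charSpan (π : A →* ℂ) : ⇑π ∈ charSpan A :=
  Submodule.subset_span ⟨π, rfl⟩

omit [Fintype A] in
lemma one_mem_charSpan : (1 : A → ℂ) ∈ charSpan A := by
  have : (1 : A → ℂ) = ⇑(1 : A →* ℂ) := by funext a; simp
  rw [this]; exact char_mem_charSpan 1

omit [Fintype A] in
lemma charSpan_mul_mem : ∀ f ∈ charSpan A, ∀ g ∈ charSpan A, f * g ∈ charSpan A := by
  intro f hf
  induction hf using Submodule.span_induction with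
  | mem f hf =>
    obtain ⟨π, rfl⟩ := hf
    intro g hg
    induction hg using Submodule.span_induction with
    | mem g hg =>
      obtain ⟨π', rfl⟩ := hg
      have : (⇑π * ⇑π' : A → ℂ) = ⇑(π * π') := by funext a; simp
      rw [this]; exact char_mem_charSpan _
    | zero => simpa using Submodule.zero_mem _
    | add u v _ _ hu hv => rw [mul_add]; exact Submodule.add_mem _ hu hv
    | smul c u _ hu => rw [mul_smul_comm]; exact Submodule.smul_mem _ _ hu
  | zero => intro g hg; simpa using Submodule.zero_mem _
  | add u v _ _ hu hv => intro g hg; rw [add_mul]; exact Submodule.add_mem _ (hu g hg) (hv g hg)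
  | smul c u _ hu => intro g hg; rw [smul_mul_assoc]; exact Submodule.smul_mem _ _ (hu g hg)

noncomputable def pickChar (a : A) : A →* ℂ :=
  if h : a = 1 then 1 else Classical.choose (exists_char_ne_one h)

lemma pickChar_spec {a : A} (ha : a ≠ 1) : pickChar a a ≠ 1 := by
  rw [pickChar, dif_neg ha]
  exact Classical.choose_spec (exists_char_ne_one ha)

lemma delta_mem_charSpan (a₀ : A) :
    (fun b : A => if b = a₀ then (1 : ℂ) else 0) ∈ charSpan A := by
  classical
  set f : A → (A → ℂ) := fun a =>
    (1 - pickChar a a)⁻¹ • (⇑(pickChar a) - (pickChar a a) • ⇑(1 : A →* ℂ)) with hf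
  have hfval : ∀ a b : A, f a b = (1 - pickChar a a)⁻¹ * (pickChar a b - pickChar a a) := by
    intro a b
    simp [hf, MonoidHom.one_apply, mul_one]
  have hfmem : ∀ a : A, f a ∈ charSpan A := by
    intro a
    exact Submodule.smul_mem _ _ (Submodule.sub_mem _ (char_mem_charSpan _)
      (Submodule.smul_mem _ _ one_mem_charSpan))
  have hFmem : (∏ a ∈ Finset.univ.erase (1 : A), f a) ∈ charSpan A := by
    refine Finset.prod_induction f (· ∈ charSpan A)
      (fun u v hu hv => charSpan_mul_mem u hu v hv) one_mem_charSpan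
      (fun a _ => hfmem a)
  have hFdelta : (∏ a ∈ Finset.univ.erase (1 : A), f a)
      = fun b : A => if b = 1 then (1 : ℂ) else 0 := by
    funext b
    rw [Finset.prod_apply]
    by_cases hb : b = 1
    · subst hb
      rw [if_pos rfl]
      refine Finset.prod_eq_one fun a ha => ?_
      have ha1 : a ≠ 1 := (Finset.mem_erase.mp ha).1
      rw [hfval, map_one]
      exact inv_mul_cancel₀ (sub_ne_zero.mpr fun h => pickChar_spec ha1 h.symm)
    · rw [if_neg hb]
      refine Finset.prod_eq_zero (Finset.mem_erase.mpr ⟨hb, Finset.mem_univ b⟩) ?_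
      rw [hfval, sub_self, mul_zero]
  have hdelta1 : (fun b : A => if b = 1 then (1 : ℂ) else 0) ∈ charSpan A := by
    rw [← hFdelta]; exact hFmem
  let Tr : (A → ℂ) →ₗ[ℂ] (A → ℂ) :=
    { toFun := fun g => fun b => g (a₀⁻¹ * b)
      map_add' := fun u v => rfl
      map_smul' := fun c u => rfl }
  have hTr : ∀ g ∈ charSpan A, Tr g ∈ charSpan A := by
    intro g hg
    induction hg using Submodule.span_induction with
    | mem g hg =>
      obtain ⟨π, rfl⟩ := hg
      have : Tr ⇑π = (π a₀⁻¹) • ⇑π := by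
        funext b; simp [Tr, map_mul, Pi.smul_apply, smul_eq_mul]
      rw [this]
      exact Submodule.smul_mem _ _ (char_mem_charSpan π)
    | zero => simpa using Submodule.zero_mem _
    | add u v _ _ hu hv => rw [map_add]; exact Submodule.add_mem _ hu hv
    | smul c u _ hu => rw [map_smul]; exact Submodule.smul_mem _ _ hu
  have heq : (fun b : A => if b = a₀ then (1 : ℂ) else 0)
      = Tr (fun b : A => if b = 1 then (1 : ℂ) else 0) := by
    funext b
    have hiff : a₀⁻¹ * b = 1 ↔ b = a₀ := by
      constructor
      · intro h; rwa [inv_mul_eq_one, eq_comm] at h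
      · intro h; rw [h, inv_mul_cancel]
    simp only [Tr, LinearMap.coe_mk, AddHom.coe_mk]
    rw [if_congr hiff rfl rfl]
  rw [heq]
  exact hTr _ hdelta1

lemma char_complete {h : A → ℂ} (hh : ∀ π : A →* ℂ, ∑ a : A, h a * π a = 0) : h = 0 := by
  let P : (A → ℂ) →ₗ[ℂ] ℂ :=
    { toFun := fun f => ∑ a : A, h a * f a
      map_add' := by intro u v; simp [mul_add, Finset.sum_add_distrib]
      map_smul' := by
        intro c u
        simp only [Pi.smul_apply, smul_eq_mul, RingHom.id_apply, Finset.mul_sum]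
        exact Finset.sum_congr rfl fun a _ => by ring }
  have hker : charSpan A ≤ LinearMap.ker P := by
    rw [charSpan, Submodule.span_le]
    rintro f ⟨π, rfl⟩
    simpa [P] using hh π
  funext a₀
  have h1 : P (fun b : A => if b = a₀ then (1 : ℂ) else 0) = 0 :=
    hker (delta_mem_charSpan a₀)
  have h2 : P (fun b : A => if b = a₀ then (1 : ℂ) else 0) = h a₀ := by
    simp [P, mul_ite, mul_one, mul_zero]
  rw [h2] at h1
  simpa using h1

/-- Power maps with exponent coprime to the group order fix every set in the Boolean
algebra generated by subgroups. -/
lemma boolalg_pow_image {T : Set A} (hT : InBoolAlg A T) {k : ℕ}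
    (hk : Nat.Coprime (Nat.card A) k) : (fun a : A => a ^ k) '' T = T := by
  have hbij : Function.Bijective (fun a : A => a ^ k) := hk.pow_left_bijective
  induction hT with
  | subgroup H =>
    apply Set.eq_of_subset_of_ncard_le
    · rintro c ⟨b, hb, rfl⟩
      exact pow_mem hb k
    · rw [Set.ncard_image_of_injective _ hbij.injective]
    · exact Set.toFinite _
  | compl _ ihs => rw [Set.image_compl_eq hbij, ihs]
  | union _ _ ihs iht => rw [Set.image_union, ihs, iht]
  | inter _ _ ihs iht => rw [Set.image_inter hbij.injective, ihs, iht]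

lemma boolalg_pow_mem_iff {T : Set A} (hT : InBoolAlg A T) {k : ℕ}
    (hk : Nat.Coprime (Nat.card A) k) (c : A) : c ^ k ∈ T ↔ c ∈ T := by
  have hbij : Function.Bijective (fun a : A => a ^ k) := hk.pow_left_bijective
  constructor
  · intro h
    rw [← boolalg_pow_image hT hk] at h
    obtain ⟨b, hb, hbc⟩ := h
    cases hbij.injective hbc
    exact hb
  · intro h
    rw [← boolalg_pow_image hT hk]
    exact ⟨c, h, rfl⟩

/-- Elements generating the same cyclic subgroup differ by a power map whose exponent is
coprime to the order of the group. -/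
lemma exists_pow_coprime {a b : A} (h : Subgroup.zpowers b = Subgroup.zpowers a) :
    ∃ k : ℕ, Nat.Coprime (Nat.card A) k ∧ a ^ k = b := by
  classical
  haveI : NeZero (Nat.card A) := ⟨Nat.card_pos.ne'⟩
  -- b is a natural power of a
  have hba : b ∈ Subgroup.zpowers a := h ▸ Subgroup.mem_zpowers b
  rw [← mem_powers_iff_mem_zpowers] at hba
  obtain ⟨j, hj0⟩ := hba
  have hj : a ^ j = b := hj0
  -- gcd (orderOf a) j = 1
  have horder : orderOf b = orderOf a := by
    rw [← Nat.card_zpowers, ← Nat.card_zpowers, h]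
  have hgcd : Nat.gcd (orderOf a) j = 1 := by
    have h1 : orderOf (a ^ j) = orderOf a / Nat.gcd (orderOf a) j := orderOf_pow a
    rw [hj, horder] at h1
    have h2 : orderOf a ≠ 0 := (orderOf_pos a).ne'
    rcases Nat.div_eq_self.mp h1.symm with h | h
    · exact absurd h h2
    · exact h
  -- lift j to an exponent coprime to the whole group order
  set m := orderOf a with hm
  set n := Nat.card A with hn
  have hmn : m ∣ n := orderOf_dvd_natCard a
  have hjm : Nat.Coprime j m := Nat.coprime_comm.mp hgcd
  obtain ⟨u, hu⟩ := ZMod.unitsMap_surjective hmn (ZMod.unitOfCoprime j hjm)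
  refine ⟨(u : ZMod n).val, Nat.coprime_comm.mp (ZMod.val_coe_unit_coprime u), ?_⟩
  have hcast : (((u : ZMod n).val : ZMod m)) = (j : ZMod m) := by
    have h2 := congrArg (fun w : (ZMod m)ˣ => (w : ZMod m)) hu
    simp only [ZMod.unitsMap_def, Units.coe_map, MonoidHom.coe_coe] at h2
    rw [ZMod.castHom_apply] at h2
    rw [ZMod.natCast_val, h2, ZMod.coe_unitOfCoprime]
  have hmod : (u : ZMod n).val ≡ j [MOD m] := (ZMod.natCast_eq_natCast_iff _ _ _).mp hcast
  rw [← hj]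
  exact (pow_eq_pow_iff_modEq.mpr (hm ▸ hmod))

end CharAux

namespace Dic

variable {A : Type*} [CommGroup A] {y : A} {hy : y * y = 1}

lemma x_mul_ofA (a : A) : Dic.x A y hy * Dic.ofA a = (⟨true, a⟩ : Dic A y hy) := by
  ext <;> simp [Dic.x, Dic.ofA]

lemma mk_inv (s : Bool) (a : A) :
    (Dic.mk s a : Dic A y hy)⁻¹ = Dic.mk s (if s then y * a else a⁻¹) := rfl

lemma mk_inv_mul (s t : Bool) (a b : A) :
    (Dic.mk s a : Dic A y hy)⁻¹ * Dic.mk t b =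
      Dic.mk (xor s t)
        (if s then (if t then a⁻¹ * b else y * (a * b)) else (if t then a * b else a⁻¹ * b)) := by
  cases s <;> cases t <;> ext <;>
    simp [mul_inv_rev, mul_comm, mul_left_comm, mul_assoc, mul_inv_cancel_left,
      inv_mul_cancel_left] <;>
    rw [mul_left_comm, mul_inv_cancel_left]

lemma mk_eq_one_iff (t : Bool) (a : A) :
    (Dic.mk t a : Dic A y hy) = 1 ↔ t = false ∧ a = 1 := by
  constructor
  · intro h
    have h1 := congrArg Dic.t h
    have h2 := congrArg Dic.a h
    exact ⟨h1, h2⟩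
  · rintro ⟨rfl, rfl⟩; rfl

lemma mem_union_decomp (U₁ U₂ : Set A) (t : Bool) (c : A) :
    (Dic.mk t c : Dic A y hy) ∈ Dic.ofA '' U₁ ∪ (fun a => Dic.x A y hy * Dic.ofA a) '' U₂ ↔
      (if t then c ∈ U₂ else c ∈ U₁) := by
  have hx : ∀ a : A, Dic.x A y hy * (⟨false, a⟩ : Dic A y hy) = ⟨true, a⟩ :=
    fun a => x_mul_ofA a
  cases t <;>
    simp [Set.mem_union, Set.mem_image, Dic.ofA, hx, Dic.mk.injEq, eq_comm]

/-- The coordinatewise power map on `Dic A y hy`. -/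
def powEquiv (e0 : A ≃ A) : Dic A y hy ≃ Dic A y hy where
  toFun g := ⟨g.t, e0 g.a⟩
  invFun g := ⟨g.t, e0.symm g.a⟩
  left_inv g := by ext <;> simp
  right_inv g := by ext <;> simp

end Dic

section Spectral

open Finset

variable {A : Type*} [CommGroup A] [Fintype A] {y : A} {hy : y * y = 1}

private lemma dicSum (F : Dic A y hy → ℂ) :
    ∑ g : Dic A y hy, F g = (∑ a : A, F ⟨false, a⟩) + (∑ a : A, F ⟨true, a⟩) := by
  let e : Bool × A ≃ Dic A y hy :=
    { toFun := fun p => ⟨p.1, p.2⟩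
      invFun := fun g => (g.t, g.a)
      left_inv := fun _ => rfl
      right_inv := fun _ => rfl }
  rw [← Equiv.sum_comp e F, Fintype.sum_prod_type, Fintype.sum_bool]
  rw [add_comm]
  rfl

private lemma sum_shift (T' : Set A) (f : A → ℂ) (c : A) :
    ∑ b : A, (if c * b ∈ T' then f b else 0)
      = ∑ b ∈ Finset.univ.filter (· ∈ T'), f (c⁻¹ * b) := by
  rw [Finset.sum_filter]
  have h := Equiv.sum_comp (Equiv.mulLeft c) (fun b => if b ∈ T' then f (c⁻¹ * b) else 0)
  rw [← h]
  refine Finset.sum_congr rfl fun b _ => ?_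
  simp

private lemma sum_inv_eq (T' : Set A) (hT' : ∀ c : A, c⁻¹ ∈ T' ↔ c ∈ T') (π : A →* ℂ) :
    ∑ b ∈ Finset.univ.filter (· ∈ T'), π b⁻¹ = ∑ b ∈ Finset.univ.filter (· ∈ T'), π b := by
  refine Finset.sum_nbij' (fun b => b⁻¹) (fun b => b⁻¹) ?_ ?_ ?_ ?_ ?_
  · intro b hb
    simp only [Finset.mem_filter, Finset.mem_univ, true_and] at hb ⊢
    exact (hT' b).mpr hb
  · intro b hb
    simp only [Finset.mem_filter, Finset.mem_univ, true_and] at hb ⊢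
    exact (hT' b).mpr hb
  · intro b _; simp
  · intro b _; simp
  · intro b _; rfl

private lemma sum_shift_char (π : A →* ℂ) (T' : Set A) (c : A) :
    (∑ b : A, if c * b ∈ T' then π b else 0)
      = π c⁻¹ * ∑ b ∈ Finset.univ.filter (· ∈ T'), π b := by
  rw [sum_shift T' (fun b => π b) c, Finset.mul_sum]
  exact Finset.sum_congr rfl fun b _ => by rw [map_mul]

private lemma sum_shift_char_inv (π : A →* ℂ) (T' : Set A)
    (hT' : ∀ c : A, c⁻¹ ∈ T' ↔ c ∈ T') (ε : ℂ) (c : A) :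
    (∑ b : A, if c * b ∈ T' then ε * π b⁻¹ else 0)
      = ε * π c * ∑ b ∈ Finset.univ.filter (· ∈ T'), π b := by
  rw [sum_shift T' (fun b => ε * π b⁻¹) c, ← sum_inv_eq T' hT' π, Finset.mul_sum]
  refine Finset.sum_congr rfl fun b _ => ?_
  rw [mul_inv_rev, inv_inv, map_mul]
  ring

/-- A Cayley graph over a generalized dicyclic group whose connection-set components are
closed under generator classes is integral. -/
theorem dic_cayley_integral
    (T : Set (Dic A y hy)) (T₁ T₂ : Set A)
    (hmem : ∀ (t : Bool) (c : A), ((⟨t, c⟩ : Dic A y hy) ∈ T) ↔ (if t then c ∈ T₂ else c ∈ T₁))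
    (h1 : (1 : Dic A y hy) ∉ T) (hsym : T⁻¹ = T)
    (hg₁ : ∀ a ∈ T₁, ∀ b : A, Subgroup.zpowers b = Subgroup.zpowers a → b ∈ T₁)
    (hg₂ : ∀ a ∈ T₂, ∀ b : A, Subgroup.zpowers b = Subgroup.zpowers a → b ∈ T₂) :
    IsIntegralGraph (cayley T) := by
  intro μ hμ
  have hinvT : ∀ g : Dic A y hy, g⁻¹ ∈ T ↔ g ∈ T := by
    intro g
    have h := Set.mem_inv (a := g) (s := T)
    rw [hsym] at h
    exact h.symm
  have hT₁inv : ∀ c : A, c⁻¹ ∈ T₁ ↔ c ∈ T₁ := by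
    intro c
    have h := hinvT ⟨false, c⟩
    rw [Dic.mk_inv] at h
    simpa [hmem] using h
  have hT₂y : ∀ c : A, y * c ∈ T₂ ↔ c ∈ T₂ := by
    intro c
    have h := hinvT ⟨true, c⟩
    rw [Dic.mk_inv] at h
    simpa [hmem] using h
  have hT₂inv : ∀ c : A, c⁻¹ ∈ T₂ ↔ c ∈ T₂ := by
    intro c
    constructor
    · intro h
      exact hg₂ c⁻¹ h c (Subgroup.zpowers_inv (g := c)).symm
    · intro h
      exact hg₂ c h c⁻¹ Subgroup.zpowers_inv
  have hadj : ∀ g h : Dic A y hy, (cayley T).Adj g h ↔ g⁻¹ * h ∈ T := by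
    intro g h
    rw [cayley_adj]
    constructor
    · rintro ⟨hne, hor⟩
      rcases hor with h' | h'
      · exact h'
      · have h2 : (h⁻¹ * g)⁻¹ ∈ T := (hinvT _).mpr h'
        simpa [mul_inv_rev] using h2
    · intro hmem'
      refine ⟨?_, Or.inl hmem'⟩
      rintro rfl
      rw [inv_mul_cancel] at hmem'
      exact h1 hmem'
  -- extract a real eigenvector
  rw [spectrum.mem_iff, Matrix.isUnit_iff_isUnit_det, isUnit_iff_ne_zero, not_not] at hμ
  obtain ⟨u, hu0, huv⟩ := (Matrix.exists_mulVec_eq_zero_iff).mpr hμ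
  have hMu : ((cayley T).adjMatrix ℝ).mulVec u = μ • u := by
    have h2 : (algebraMap ℝ (Matrix (Dic A y hy) (Dic A y hy) ℝ) μ
        - (cayley T).adjMatrix ℝ).mulVec u = 0 := huv
    rw [Matrix.sub_mulVec, Algebra.algebraMap_eq_smul_one, Matrix.smul_mulVec,
      Matrix.one_mulVec, sub_eq_zero] at h2
    exact h2.symm
  set u' : Dic A y hy → ℂ := fun g => ((u g : ℝ) : ℂ) with hu'
  have hu'0 : u' ≠ 0 := by
    intro h
    apply hu0
    funext g
    have h2 := congrFun h g
    simpa [hu'] using h2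
  have hNu : ((cayley T).adjMatrix ℂ).mulVec u' = (μ : ℂ) • u' := by
    funext g
    have hrow := congrFun hMu g
    simp only [Matrix.mulVec, dotProduct, SimpleGraph.adjMatrix_apply,
      Pi.smul_apply, smul_eq_mul] at hrow ⊢
    calc ∑ h, (if (cayley T).Adj g h then (1:ℂ) else 0) * u' h
        = ((∑ h, (if (cayley T).Adj g h then (1:ℝ) else 0) * u h : ℝ) : ℂ) := by
          rw [Complex.ofReal_sum]
          exact Finset.sum_congr rfl fun h _ => by split_ifs <;> simp [hu']
      _ = ((μ * u g : ℝ) : ℂ) := by rw [hrow]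
      _ = (μ : ℂ) * u' g := by push_cast; rfl
  -- character sums
  set α : (A →* ℂ) → ℂ := fun π => ∑ b ∈ Finset.univ.filter (· ∈ T₁), π b with hα
  set β : (A →* ℂ) → ℂ := fun π => ∑ b ∈ Finset.univ.filter (· ∈ T₂), π b with hβ
  have hαint : ∀ π : A →* ℂ, α π ∈ intsC := fun π => char_sum_int_of_genclosed π T₁ hg₁
  have hβint : ∀ π : A →* ℂ, β π ∈ intsC := fun π => char_sum_int_of_genclosed π T₂ hg₂
  -- the eigenvectors coming from characters
  have heig : ∀ (π : A →* ℂ) (ε : ℂ), ε * ε = 1 →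
      ((cayley T).adjMatrix ℂ).mulVec (fun g : Dic A y hy => if g.t then ε * π g.a⁻¹ else π g.a)
        = (α π + ε * β π) • (fun g : Dic A y hy => if g.t then ε * π g.a⁻¹ else π g.a) := by
    intro π ε hε
    funext g
    obtain ⟨tg, ag⟩ := g
    simp only [Matrix.mulVec, dotProduct, SimpleGraph.adjMatrix_apply,
      Pi.smul_apply, smul_eq_mul]
    have hterm : ∀ h : Dic A y hy,
        (if (cayley T).Adj ⟨tg, ag⟩ h then (1:ℂ) else 0) * (if h.t then ε * π h.a⁻¹ else π h.a)
          = if (⟨tg, ag⟩ : Dic A y hy)⁻¹ * h ∈ T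
              then (if h.t then ε * π h.a⁻¹ else π h.a) else 0 := by
      intro h
      rw [← hadj]
      rcases Classical.em ((cayley T).Adj ⟨tg, ag⟩ h) with hc | hc <;> simp [hc]
    rw [Finset.sum_congr rfl fun h _ => hterm h]
    rw [dicSum (fun h => if (⟨tg, ag⟩ : Dic A y hy)⁻¹ * h ∈ T
      then (if h.t then ε * π h.a⁻¹ else π h.a) else 0)]
    cases tg with
    | false =>
      have s1 : (∑ b : A, if (⟨false, ag⟩ : Dic A y hy)⁻¹ * ⟨false, b⟩ ∈ T
            then (if (⟨false, b⟩ : Dic A y hy).t then ε * π (⟨false, b⟩ : Dic A y hy).a⁻¹ else π (⟨false, b⟩ : Dic A y hy).a)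
            else 0)
          = π ag * α π := by
        have e1 : ∀ b : A, ((⟨false, ag⟩ : Dic A y hy)⁻¹ * ⟨false, b⟩ ∈ T) ↔ ag⁻¹ * b ∈ T₁ := by
          intro b
          rw [Dic.mk_inv_mul]
          simpa using hmem false (ag⁻¹ * b)
        calc _ = ∑ b : A, (if ag⁻¹ * b ∈ T₁ then π b else 0) := by
              refine Finset.sum_congr rfl fun b _ => ?_
              simp only [e1, Bool.false_eq_true, if_false, if_true, ite_true, ite_false]
          _ = π ag * α π := by rw [sum_shift_char π T₁ ag⁻¹, inv_inv, hα]
      have s2 : (∑ b : A, if (⟨false, ag⟩ : Dic A y hy)⁻¹ * ⟨true, b⟩ ∈ T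
            then (if (⟨true, b⟩ : Dic A y hy).t then ε * π (⟨true, b⟩ : Dic A y hy).a⁻¹ else π (⟨true, b⟩ : Dic A y hy).a)
            else 0)
          = ε * π ag * β π := by
        have e2 : ∀ b : A, ((⟨false, ag⟩ : Dic A y hy)⁻¹ * ⟨true, b⟩ ∈ T) ↔ ag * b ∈ T₂ := by
          intro b
          rw [Dic.mk_inv_mul]
          simpa using hmem true (ag * b)
        calc _ = ∑ b : A, (if ag * b ∈ T₂ then ε * π b⁻¹ else 0) := by
              refine Finset.sum_congr rfl fun b _ => ?_
              simp only [e2, Bool.false_eq_true, if_false, if_true, ite_true, ite_false]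
          _ = ε * π ag * β π := by rw [sum_shift_char_inv π T₂ hT₂inv ε ag, hβ]
      rw [s1, s2]
      show π ag * α π + ε * π ag * β π = (α π + ε * β π) * π ag
      ring
    | true =>
      have s1 : (∑ b : A, if (⟨true, ag⟩ : Dic A y hy)⁻¹ * ⟨false, b⟩ ∈ T
            then (if (⟨false, b⟩ : Dic A y hy).t then ε * π (⟨false, b⟩ : Dic A y hy).a⁻¹ else π (⟨false, b⟩ : Dic A y hy).a)
            else 0)
          = π ag⁻¹ * β π := by
        have e1 : ∀ b : A, ((⟨true, ag⟩ : Dic A y hy)⁻¹ * ⟨false, b⟩ ∈ T) ↔ ag * b ∈ T₂ := by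
          intro b
          rw [Dic.mk_inv_mul]
          have h3 := hmem true (y * (ag * b))
          simpa [hT₂y (ag * b)] using h3
        calc _ = ∑ b : A, (if ag * b ∈ T₂ then π b else 0) := by
              refine Finset.sum_congr rfl fun b _ => ?_
              simp only [e1, Bool.false_eq_true, if_false, if_true, ite_true, ite_false]
          _ = π ag⁻¹ * β π := by rw [sum_shift_char π T₂ ag, hβ]
      have s2 : (∑ b : A, if (⟨true, ag⟩ : Dic A y hy)⁻¹ * ⟨true, b⟩ ∈ T
            then (if (⟨true, b⟩ : Dic A y hy).t then ε * π (⟨true, b⟩ : Dic A y hy).a⁻¹ else π (⟨true, b⟩ : Dic A y hy).a)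
            else 0)
          = ε * π ag⁻¹ * α π := by
        have e2 : ∀ b : A, ((⟨true, ag⟩ : Dic A y hy)⁻¹ * ⟨true, b⟩ ∈ T) ↔ ag⁻¹ * b ∈ T₁ := by
          intro b
          rw [Dic.mk_inv_mul]
          simpa using hmem false (ag⁻¹ * b)
        calc _ = ∑ b : A, (if ag⁻¹ * b ∈ T₁ then ε * π b⁻¹ else 0) := by
              refine Finset.sum_congr rfl fun b _ => ?_
              simp only [e2, Bool.false_eq_true, if_false, if_true, ite_true, ite_false]
          _ = ε * π ag⁻¹ * α π := by rw [sum_shift_char_inv π T₁ hT₁inv ε ag⁻¹, hα]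
      rw [s1, s2]
      show π ag⁻¹ * β π + ε * π ag⁻¹ * α π = (α π + ε * β π) * (ε * π ag⁻¹)
      linear_combination (-(π ag⁻¹ * β π)) * hε
  -- the eigenvalue must be one of the integral character eigenvalues
  have hexists : ∃ (π : A →* ℂ) (ε : ℂ), (ε = 1 ∨ ε = -1) ∧ (μ : ℂ) = α π + ε * β π := by
    by_contra hcon
    push_neg at hcon
    have hkey : ∀ (π : A →* ℂ) (ε : ℂ), ε = 1 ∨ ε = -1 →
        ∑ g : Dic A y hy, u' g * (if g.t then ε * π g.a⁻¹ else π g.a) = 0 := by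
      intro π ε hεc
      have hε : ε * ε = 1 := by rcases hεc with rfl | rfl <;> norm_num
      have hwe := heig π ε hε
      have hne : (μ : ℂ) ≠ α π + ε * β π := hcon π ε hεc
      have hsymN : ∀ g h : Dic A y hy,
          ((cayley T).adjMatrix ℂ) g h = ((cayley T).adjMatrix ℂ) h g := by
        intro g h
        simp [SimpleGraph.adjMatrix_apply, SimpleGraph.adj_comm]
      have hcalc : (μ : ℂ) * ∑ g, u' g * (if g.t then ε * π g.a⁻¹ else π g.a)
          = (α π + ε * β π) * ∑ g, u' g * (if g.t then ε * π g.a⁻¹ else π g.a) := by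
        calc (μ:ℂ) * ∑ g, u' g * (if g.t then ε * π g.a⁻¹ else π g.a)
            = ∑ g, ((μ:ℂ) * u' g) * (if g.t then ε * π g.a⁻¹ else π g.a) := by
              rw [Finset.mul_sum]
              exact Finset.sum_congr rfl fun g _ => by ring
          _ = ∑ g, (((cayley T).adjMatrix ℂ).mulVec u') g
                * (if g.t then ε * π g.a⁻¹ else π g.a) := by
              refine Finset.sum_congr rfl fun g _ => ?_
              rw [hNu]
              simp
          _ = ∑ g, ∑ h, ((cayley T).adjMatrix ℂ) g h * u' h
                * (if g.t then ε * π g.a⁻¹ else π g.a) := by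
              refine Finset.sum_congr rfl fun g _ => ?_
              simp only [Matrix.mulVec, dotProduct]
              rw [Finset.sum_mul]
          _ = ∑ h, ∑ g, ((cayley T).adjMatrix ℂ) g h * u' h
                * (if g.t then ε * π g.a⁻¹ else π g.a) := Finset.sum_comm
          _ = ∑ h, u' h * (((cayley T).adjMatrix ℂ).mulVec
                (fun g => if g.t then ε * π g.a⁻¹ else π g.a)) h := by
              refine Finset.sum_congr rfl fun h _ => ?_
              simp only [Matrix.mulVec, dotProduct]
              rw [Finset.mul_sum]
              refine Finset.sum_congr rfl fun g _ => ?_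
              rw [hsymN g h]
              ring
          _ = ∑ h, u' h * ((α π + ε * β π) * (if h.t then ε * π h.a⁻¹ else π h.a)) := by
              refine Finset.sum_congr rfl fun h _ => ?_
              rw [hwe]
              simp
          _ = ∑ h, (α π + ε * β π) * (u' h * (if h.t then ε * π h.a⁻¹ else π h.a)) := by
              exact Finset.sum_congr rfl fun h _ => by ring
          _ = (α π + ε * β π) * ∑ h, u' h * (if h.t then ε * π h.a⁻¹ else π h.a) :=
              (Finset.mul_sum _ _ _).symm
      by_contra hP
      exact hne (mul_right_cancel₀ hP hcalc)
    have hfalse : ∀ π : A →* ℂ, ∑ a : A, u' ⟨false, a⟩ * π a = 0 := by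
      intro π
      have hp := hkey π 1 (Or.inl rfl)
      have hm := hkey π (-1) (Or.inr rfl)
      rw [dicSum (fun g => u' g * (if g.t then (1:ℂ) * π g.a⁻¹ else π g.a))] at hp
      rw [dicSum (fun g => u' g * (if g.t then (-1:ℂ) * π g.a⁻¹ else π g.a))] at hm
      simp only [Bool.false_eq_true, if_false, if_true, ite_true, ite_false, one_mul,
        neg_mul, mul_neg, Finset.sum_neg_distrib] at hp hm
      linear_combination (hp + hm) / 2
    have htrue : ∀ π : A →* ℂ, ∑ a : A, u' ⟨true, a⟩ * π a = 0 := by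
      intro π
      have hp := hkey (π.comp invMonoidHom) 1 (Or.inl rfl)
      have hm := hkey (π.comp invMonoidHom) (-1) (Or.inr rfl)
      rw [dicSum (fun g => u' g *
        (if g.t then (1:ℂ) * (π.comp invMonoidHom) g.a⁻¹ else (π.comp invMonoidHom) g.a))] at hp
      rw [dicSum (fun g => u' g *
        (if g.t then (-1:ℂ) * (π.comp invMonoidHom) g.a⁻¹ else (π.comp invMonoidHom) g.a))] at hm
      simp only [Bool.false_eq_true, if_false, if_true, ite_true, ite_false, one_mul,
        neg_mul, mul_neg, Finset.sum_neg_distrib, MonoidHom.comp_apply,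
        invMonoidHom_apply, inv_inv] at hp hm
      linear_combination (hp - hm) / 2
    have hzero : u' = 0 := by
      have h1c : (fun a : A => u' ⟨false, a⟩) = 0 := char_complete (fun π => hfalse π)
      have h2c : (fun a : A => u' ⟨true, a⟩) = 0 := char_complete (fun π => htrue π)
      funext g
      obtain ⟨t, a⟩ := g
      cases t
      · exact congrFun h1c a
      · exact congrFun h2c a
    exact hu'0 hzero
  obtain ⟨π, ε, hεc, hμeq⟩ := hexists
  obtain ⟨z₁, hz₁⟩ := mem_intsC.mp (hαint π)
  obtain ⟨z₂, hz₂⟩ := mem_intsC.mp (hβint π)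
  rcases hεc with rfl | rfl
  · refine ⟨z₁ + z₂, ?_⟩
    have h2 : (μ : ℂ) = ((z₁ + z₂ : ℤ) : ℂ) := by
      rw [hμeq, ← hz₁, ← hz₂]
      push_cast
      ring
    exact_mod_cast h2.symm
  · refine ⟨z₁ - z₂, ?_⟩
    have h2 : (μ : ℂ) = ((z₁ - z₂ : ℤ) : ℂ) := by
      rw [hμeq, ← hz₁, ← hz₂]
      push_cast
      ring
    exact_mod_cast h2.symm

end Spectral

/-- Theorem 4.1: if `S = S₁ ∪ xS₂` generates `Dic(A,y)`, `1 ∉ S`, `S⁻¹ = S`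
and `S₁, S₂ ∈ B(A)`, then for every non-empty finite set `D` of positive integers the distance
power `Cay(Dic(A,y), S)^D` is a Cayley graph `Cay(Dic(A,y), S^D)` with `S^D = S₁^D ∪ xS₂^D`,
`1 ∉ S^D`, `(S^D)⁻¹ = S^D`; it is integral, `(S₂^D)⁻¹ = S₂^D`, and it is connected if `1 ∈ D`. -/
theorem dic_distance_power_integral {A : Type*} [CommGroup A] [Fintype A]
    (hA : Even (Fintype.card A)) (hexp : 3 ≤ Monoid.exponent A)
    (y : A) (hy : y * y = 1) (hy1 : y ≠ 1)
    (S : Set (Dic A y hy)) (S₁ S₂ : Set A)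
    (hS : S = Dic.ofA '' S₁ ∪ (fun a => Dic.x A y hy * Dic.ofA a) '' S₂)
    (h1S : (1 : Dic A y hy) ∉ S) (hSinv : S⁻¹ = S)
    (hgen : Subgroup.closure S = ⊤)
    (D : Finset ℕ) (hD : D.Nonempty) (hDpos : ∀ d ∈ D, 0 < d)
    (hS₁ : InBoolAlg A S₁) (hS₂ : InBoolAlg A S₂) :
    ∃ S₁D S₂D : Set A, ∃ SD : Set (Dic A y hy),
      SD = Dic.ofA '' S₁D ∪ (fun a => Dic.x A y hy * Dic.ofA a) '' S₂D ∧
      (1 : Dic A y hy) ∉ SD ∧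
      SD⁻¹ = SD ∧
      distPower (cayley S) D = cayley SD ∧
      IsIntegralGraph (distPower (cayley S) D) ∧
      S₂D⁻¹ = S₂D ∧
      (1 ∈ D → (distPower (cayley S) D).Connected) := by
  classical
  have hmemS : ∀ (t : Bool) (c : A), ((⟨t, c⟩ : Dic A y hy) ∈ S) ↔ (if t then c ∈ S₂ else c ∈ S₁) := by
    intro t c
    rw [hS]
    exact Dic.mem_union_decomp S₁ S₂ t c
  set SD : Set (Dic A y hy) := {g | g ≠ 1 ∧ (cayley S).dist 1 g ∈ D} with hSDdef
  set S₁D : Set A := {c | (⟨false, c⟩ : Dic A y hy) ∈ SD} with hS₁Ddef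
  set S₂D : Set A := {c | (⟨true, c⟩ : Dic A y hy) ∈ SD} with hS₂Ddef
  have hmemSD : ∀ (t : Bool) (c : A),
      ((⟨t, c⟩ : Dic A y hy) ∈ SD) ↔ (if t then c ∈ S₂D else c ∈ S₁D) := by
    intro t c
    cases t
    · simp [hS₁Ddef]
    · simp [hS₂Ddef]
  have hdecomp : SD = Dic.ofA '' S₁D ∪ (fun a => Dic.x A y hy * Dic.ofA a) '' S₂D := by
    ext g
    obtain ⟨t, c⟩ := g
    rw [Dic.mem_union_decomp, hmemSD]
  have h1SD : (1 : Dic A y hy) ∉ SD := fun h => h.1 rfl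
  have hSDinv_mem : ∀ g : Dic A y hy, g⁻¹ ∈ SD ↔ g ∈ SD := by
    intro g
    simp only [hSDdef, Set.mem_setOf_eq, ne_eq, inv_eq_one]
    rw [cayley_dist_inv]
  have hSDinv : SD⁻¹ = SD := by
    ext g
    rw [Set.mem_inv]
    exact hSDinv_mem g
  have hDP : distPower (cayley S) D = cayley SD := by
    ext v w
    show (v ≠ w ∧ (cayley S).dist v w ∈ D) ↔ _
    rw [cayley_adj]
    constructor
    · rintro ⟨hne, hdist⟩
      refine ⟨hne, Or.inl ⟨fun h => hne (by rwa [inv_mul_eq_one] at h), ?_⟩⟩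
      rw [← cayley_dist_eq]
      exact hdist
    · rintro ⟨hne, hor⟩
      refine ⟨hne, ?_⟩
      rcases hor with h | h
      · rw [cayley_dist_eq S v w]
        exact h.2
      · rw [cayley_dist_eq S v w,
          show v⁻¹ * w = (w⁻¹ * v)⁻¹ by rw [mul_inv_rev, inv_inv], cayley_dist_inv]
        exact h.2
  -- power-map invariance of SD
  have hpowmem : ∀ (k : ℕ), Nat.Coprime (Nat.card A) k → ∀ (t : Bool) (c : A),
      ((⟨t, c ^ k⟩ : Dic A y hy) ∈ SD ↔ (⟨t, c⟩ : Dic A y hy) ∈ SD) := by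
    intro k hk t c
    have hbij : Function.Bijective (fun a : A => a ^ k) := hk.pow_left_bijective
    have hkodd : k % 2 = 1 := by
      rcases Nat.even_or_odd k with he | ho
      · exfalso
        obtain ⟨m, hm⟩ := hA
        have h2 : 2 ∣ Nat.card A := by
          rw [Nat.card_eq_fintype_card, hm]
          exact ⟨m, by ring⟩
        have h2k : 2 ∣ k := he.two_dvd
        have h12 : (2 : ℕ) ∣ 1 := hk ▸ Nat.dvd_gcd h2 h2k
        norm_num at h12
      · exact Nat.odd_iff.mp ho
    have hyk : y ^ k = y := by
      obtain ⟨m, hm⟩ := Nat.odd_iff.mpr hkodd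
      have hy2 : y ^ 2 = 1 := by rw [pow_two, hy]
      rw [hm, pow_add, pow_mul, hy2, one_pow, one_mul, pow_one]
    let e0 : A ≃ A := Equiv.ofBijective _ hbij
    have he0 : ∀ a : A, e0 a = a ^ k := fun a => rfl
    have hS₁k : ∀ c : A, c ^ k ∈ S₁ ↔ c ∈ S₁ := boolalg_pow_mem_iff hS₁ hk
    have hS₂k : ∀ c : A, c ^ k ∈ S₂ ↔ c ∈ S₂ := boolalg_pow_mem_iff hS₂ hk
    have hiso : ∀ g h : Dic A y hy,
        ((Dic.powEquiv e0) g)⁻¹ * (Dic.powEquiv e0) h ∈ S ↔ g⁻¹ * h ∈ S := by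
      intro g h
      obtain ⟨s, a⟩ := g
      obtain ⟨t', b⟩ := h
      show ((⟨s, e0 a⟩ : Dic A y hy))⁻¹ * ⟨t', e0 b⟩ ∈ S ↔ _
      rw [Dic.mk_inv_mul, Dic.mk_inv_mul, hmemS, hmemS, he0, he0]
      cases s <;> cases t' <;>
        simp only [Bool.false_eq_true, if_false, if_true, ite_true, ite_false, Bool.xor_false,
          Bool.xor_true, Bool.false_xor, Bool.true_xor, Bool.not_true, Bool.not_false]
      · rw [← inv_pow, ← mul_pow]
        exact hS₁k _
      · rw [← mul_pow]
        exact hS₂k _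
      · rw [show y * (a ^ k * b ^ k) = (y * (a * b)) ^ k by rw [mul_pow, mul_pow, hyk]]
        exact hS₂k _
      · rw [← inv_pow, ← mul_pow]
        exact hS₁k _
    let hψ : cayley S ≃g cayley S := cayleyIso S (Dic.powEquiv e0) hiso
    have hψapp : ∀ g : Dic A y hy, hψ g = ⟨g.t, e0 g.a⟩ := fun _ => rfl
    have hψ1 : hψ (1 : Dic A y hy) = 1 := by
      rw [hψapp]
      ext
      · rfl
      · show e0 (1 : A) = 1
        rw [he0, one_pow]
    have hdist : (cayley S).dist 1 (⟨t, c ^ k⟩ : Dic A y hy)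
        = (cayley S).dist 1 (⟨t, c⟩ : Dic A y hy) := by
      have h := iso_dist hψ 1 ⟨t, c⟩
      rw [hψ1, hψapp] at h
      exact h
    have hone : ((⟨t, c ^ k⟩ : Dic A y hy) = 1) ↔ ((⟨t, c⟩ : Dic A y hy) = 1) := by
      rw [Dic.mk_eq_one_iff, Dic.mk_eq_one_iff]
      have : c ^ k = 1 ↔ c = 1 := by
        constructor
        · intro h
          have := hbij.injective (a₁ := c) (a₂ := 1) (by simpa using h)
          exact this
        · rintro rfl; exact one_pow k
      rw [this]
    simp only [hSDdef, Set.mem_setOf_eq, ne_eq, hdist, hone]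
  have hgcS₁D : ∀ a ∈ S₁D, ∀ b : A, Subgroup.zpowers b = Subgroup.zpowers a → b ∈ S₁D := by
    intro a ha b hzp
    obtain ⟨k, hk, hak⟩ := exists_pow_coprime hzp
    have h2 : (⟨false, a ^ k⟩ : Dic A y hy) ∈ SD := (hpowmem k hk false a).mpr ha
    rw [hak] at h2
    exact h2
  have hgcS₂D : ∀ a ∈ S₂D, ∀ b : A, Subgroup.zpowers b = Subgroup.zpowers a → b ∈ S₂D := by
    intro a ha b hzp
    obtain ⟨k, hk, hak⟩ := exists_pow_coprime hzp
    have h2 : (⟨true, a ^ k⟩ : Dic A y hy) ∈ SD := (hpowmem k hk true a).mpr ha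
    rw [hak] at h2
    exact h2
  have hS₂Dinv : S₂D⁻¹ = S₂D := by
    ext c
    rw [Set.mem_inv]
    constructor
    · intro h
      exact hgcS₂D c⁻¹ h c (Subgroup.zpowers_inv (g := c)).symm
    · intro h
      exact hgcS₂D c h c⁻¹ Subgroup.zpowers_inv
  refine ⟨S₁D, S₂D, SD, hdecomp, h1SD, hSDinv, hDP, ?_, hS₂Dinv, ?_⟩
  · rw [hDP]
    exact dic_cayley_integral SD S₁D S₂D hmemSD h1SD hSDinv hgcS₁D hgcS₂D
  · intro h1D
    have hconn : (cayley S).Connected := cayley_connected h1S hgen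
    refine hconn.mono ?_
    intro v w hadj
    refine ⟨hadj.ne, ?_⟩
    rw [SimpleGraph.dist_eq_one_iff_adj.mpr hadj]
    exact h1D
end

section
/- Let S ⊆ Dic(A,y) with 1 ∉ S, S⁻¹ = S and ⟨S⟩ = Dic(A,y). Then ℓ_S(x³a) = ℓ_S(xa) for every a ∈ A; equivalently, ℓ_S(x(ya)) = ℓ_S(xa) for every a ∈ A. -/
open scoped Classical Pointwise

lemma mulPow_inv_mem {G : Type*} [Group G] {S : Set G} (hSinv : S⁻¹ = S) {n : ℕ} {g : G}
    (hg : g ∈ mulPow S n) : g⁻¹ ∈ mulPow S n := by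
  obtain ⟨l, hlen, hmem, hprod⟩ := hg
  refine ⟨(l.map Inv.inv).reverse, by simp [hlen], ?_, ?_⟩
  · intro u hu
    simp only [List.mem_reverse, List.mem_map] at hu
    obtain ⟨v, hv, rfl⟩ := hu
    have : v⁻¹ ∈ S⁻¹ := by
      rw [Set.mem_inv, inv_inv]; exact hmem v hv
    rwa [hSinv] at this
  · rw [← List.prod_inv_reverse, hprod]

lemma wordLen_inv {G : Type*} [Group G] {S : Set G} (hSinv : S⁻¹ = S) (g : G) :
    wordLen S g⁻¹ = wordLen S g := by
  unfold wordLen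
  have h1 : (g⁻¹ = 1) = (g = 1) := by simp
  rw [h1]
  have h2 : {n : ℕ | g⁻¹ ∈ mulPow S n} = {n : ℕ | g ∈ mulPow S n} := by
    ext n
    constructor
    · intro h; simpa using mulPow_inv_mem hSinv h
    · intro h; exact mulPow_inv_mem hSinv h
  rw [h2]

/-- for `S` generating `Dic(A,y)` with `1 ∉ S`, `S⁻¹ = S`, one has
`ℓ_S(x³a) = ℓ_S(xa)` for all `a ∈ A`; equivalently, `ℓ_S(x(ya)) = ℓ_S(xa)` for all `a ∈ A`. -/
theorem dic_wordLen_x_cubed {A : Type*} [CommGroup A] [Fintype A]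
    (hA : Even (Fintype.card A)) (hexp : 3 ≤ Monoid.exponent A)
    (y : A) (hy : y * y = 1) (hy1 : y ≠ 1)
    (S : Set (Dic A y hy)) (h1S : (1 : Dic A y hy) ∉ S) (hSinv : S⁻¹ = S)
    (hgen : Subgroup.closure S = ⊤) :
    (∀ a : A, wordLen S (Dic.x A y hy ^ 3 * Dic.ofA a) = wordLen S (Dic.x A y hy * Dic.ofA a)) ∧
    (∀ a : A, wordLen S (Dic.x A y hy * Dic.ofA (y * a))
      = wordLen S (Dic.x A y hy * Dic.ofA a)) := by
  have key : ∀ a : A, Dic.x A y hy * Dic.ofA (y * a) = (Dic.x A y hy * Dic.ofA a)⁻¹ := by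
    intro a
    ext <;> simp [Dic.x, Dic.ofA, mul_comm]
  have key3 : ∀ a : A, Dic.x A y hy ^ 3 * Dic.ofA a = (Dic.x A y hy * Dic.ofA a)⁻¹ := by
    intro a
    have hyi : y⁻¹ = y := inv_eq_of_mul_eq_one_right hy
    ext <;> simp [pow_succ, Dic.x, Dic.ofA, hyi, mul_comm]
  constructor
  · intro a; rw [key3 a, wordLen_inv hSinv]
  · intro a; rw [key a, wordLen_inv hSinv]
end

section
/- Let S ⊆ Dic(A,y) with 1 ∉ S, S⁻¹ = S and ⟨S⟩ = Dic(A,y), written S = S₁ ∪ xS₂ with S₁, S₂ ⊆ A, and assume S₂⁻¹ = S₂. Then ℓ_S(xa) = ℓ_S(xa⁻¹) for every a ∈ A. -/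
open scoped Classical Pointwise

/-- Conjugation by `x` on `Dic A y hy`: sends `a ↦ a⁻¹` and `x b ↦ x b⁻¹`. -/
def dicNeg {A : Type*} [CommGroup A] {y : A} {hy : y * y = 1} :
    Dic A y hy →* Dic A y hy where
  toFun g := ⟨g.t, g.a⁻¹⟩
  map_one' := by ext <;> simp
  map_mul' g h := by
    have hyi : y⁻¹ = y := inv_eq_of_mul_eq_one_right hy
    ext
    · simp
    · cases hg : g.t <;> cases hh : h.t <;>
        simp [hg, hh, hyi, mul_inv_rev, mul_comm, mul_assoc, mul_left_comm]

@[simp] lemma dicNeg_t {A : Type*} [CommGroup A] {y : A} {hy : y * y = 1}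
    (g : Dic A y hy) : (dicNeg g).t = g.t := rfl

@[simp] lemma dicNeg_a {A : Type*} [CommGroup A] {y : A} {hy : y * y = 1}
    (g : Dic A y hy) : (dicNeg g).a = g.a⁻¹ := rfl

lemma mulPow_map {G : Type*} [Group G] (S : Set G) (φ : G →* G)
    (hφ : ∀ s ∈ S, φ s ∈ S) {g : G} {n : ℕ} (hg : g ∈ mulPow S n) :
    φ g ∈ mulPow S n := by
  obtain ⟨l, hl, hmem, hprod⟩ := hg
  refine ⟨l.map φ, by simp [hl], ?_, ?_⟩
  · intro u hu
    obtain ⟨v, hv, rfl⟩ := List.mem_map.mp hu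
    exact hφ v (hmem v hv)
  · rw [← hprod]
    exact l.prod_hom φ

lemma wordLen_hom_inv {G : Type*} [Group G] (S : Set G) (φ : G →* G)
    (hφ : ∀ s ∈ S, φ s ∈ S) (hinv : ∀ g, φ (φ g) = g) (g : G) :
    wordLen S (φ g) = wordLen S g := by
  have h1 : φ g = 1 ↔ g = 1 := by
    constructor
    · intro h
      rw [← hinv g, h, map_one]
    · intro h
      rw [h, map_one]
  have hset : {n : ℕ | φ g ∈ mulPow S n} = {n : ℕ | g ∈ mulPow S n} := by
    ext n
    constructor
    · intro h
      have := mulPow_map S φ hφ h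
      rwa [hinv] at this
    · exact fun h => mulPow_map S φ hφ h
  unfold wordLen
  rw [hset]
  by_cases hg : g = 1
  · simp [hg, h1.mpr hg]
  · simp [hg, (not_iff_not.mpr h1).mpr hg]

/-- for `S = S₁ ∪ xS₂` generating `Dic(A,y)` with `1 ∉ S`, `S⁻¹ = S` and
`S₂⁻¹ = S₂`, one has `ℓ_S(xa) = ℓ_S(xa⁻¹)` for every `a ∈ A`. -/
theorem dic_wordLen_x_inv {A : Type*} [CommGroup A] [Fintype A]
    (hA : Even (Fintype.card A)) (hexp : 3 ≤ Monoid.exponent A)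
    (y : A) (hy : y * y = 1) (hy1 : y ≠ 1)
    (S : Set (Dic A y hy)) (S₁ S₂ : Set A)
    (hS : S = Dic.ofA '' S₁ ∪ (fun a => Dic.x A y hy * Dic.ofA a) '' S₂)
    (h1S : (1 : Dic A y hy) ∉ S) (hSinv : S⁻¹ = S)
    (hgen : Subgroup.closure S = ⊤) (hS₂inv : S₂⁻¹ = S₂) :
    ∀ a : A, wordLen S (Dic.x A y hy * Dic.ofA a) = wordLen S (Dic.x A y hy * Dic.ofA a⁻¹) := by
  intro a
  have hφS : ∀ s ∈ S, dicNeg s ∈ S := by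
    intro s hs
    rw [hS] at hs ⊢
    rcases hs with ⟨b, hb, rfl⟩ | ⟨b, hb, rfl⟩
    · left
      refine ⟨b⁻¹, ?_, by ext <;> simp [Dic.ofA]⟩
      have h1 : (Dic.ofA b : Dic A y hy)⁻¹ ∈ S := by
        rw [← hSinv]
        exact Set.inv_mem_inv.mpr (hS ▸ Or.inl ⟨b, hb, rfl⟩)
      rw [hS] at h1
      rcases h1 with ⟨c, hc, hceq⟩ | ⟨c, hc, hceq⟩
      · have hca : c = b⁻¹ := by
          have := congrArg Dic.a hceq
          simpa [Dic.ofA] using this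
        rwa [← hca]
      · exfalso
        have := congrArg Dic.t hceq
        simp [Dic.ofA, Dic.x] at this
    · right
      refine ⟨b⁻¹, ?_, by ext <;> simp [Dic.ofA, Dic.x]⟩
      rw [← hS₂inv]
      simpa using hb
  have hinv : ∀ g : Dic A y hy, dicNeg (dicNeg g) = g := by
    intro g
    ext <;> simp
  have key := wordLen_hom_inv S dicNeg hφS hinv (Dic.x A y hy * Dic.ofA a⁻¹)
  have h1 : dicNeg (Dic.x A y hy * Dic.ofA a⁻¹) = Dic.x A y hy * Dic.ofA a := by
    ext <;> simp [Dic.x, Dic.ofA]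
  rw [h1] at key
  exact key
end

section
/- Let S₁ ⊆ A with 1 ∉ S₁, S₁ ∈ B(A) and ⟨S₁⟩ = A (for instance S₁ = A \ {1}), and let D be a non-empty finite set of positive integers such that the distance power Cay(Dic(A,y), S₁ ∪ x{1,y})^D is connected. Then Cay(Dic(A,y), S₁ ∪ x{1,y})^D is a Cayley graph over Dic(A,y) which is distance integral. -/
open scoped Classical Pointwise

section AuxHelpers

open Finset

/-- Integer-valued complex numbers. -/
private def IsIntC (z : ℂ) : Prop := ∃ k : ℤ, z = (k : ℂ)

private lemma IsIntC.add {z w : ℂ} (hz : IsIntC z) (hw : IsIntC w) : IsIntC (z + w) := by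
  obtain ⟨a, rfl⟩ := hz; obtain ⟨b, rfl⟩ := hw; exact ⟨a + b, by push_cast; ring⟩

private lemma IsIntC.sub {z w : ℂ} (hz : IsIntC z) (hw : IsIntC w) : IsIntC (z - w) := by
  obtain ⟨a, rfl⟩ := hz; obtain ⟨b, rfl⟩ := hw; exact ⟨a - b, by push_cast; ring⟩

private lemma IsIntC.mul {z w : ℂ} (hz : IsIntC z) (hw : IsIntC w) : IsIntC (z * w) := by
  obtain ⟨a, rfl⟩ := hz; obtain ⟨b, rfl⟩ := hw; exact ⟨a * b, by push_cast; ring⟩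

private lemma IsIntC.zero : IsIntC 0 := ⟨0, by simp⟩

private lemma IsIntC.natCast (n : ℕ) : IsIntC (n : ℂ) := ⟨n, by push_cast; ring⟩

private lemma IsIntC.sum {ι : Type*} (s : Finset ι) (f : ι → ℂ)
    (h : ∀ i ∈ s, IsIntC (f i)) : IsIntC (∑ i ∈ s, f i) := by
  classical
  induction s using Finset.induction with
  | empty => simpa using IsIntC.zero
  | insert _ _ hx ih =>
    rw [Finset.sum_insert hx]
    exact (h _ (Finset.mem_insert_self _ _)).add
      (ih fun i hi => h i (Finset.mem_insert_of_mem hi))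

/-! ### Distances and graph equivalences -/

private lemma dist_equiv_le {V : Type*} (Γ : SimpleGraph V) (e : V ≃ V)
    (h : ∀ a b, Γ.Adj a b ↔ Γ.Adj (e a) (e b)) (v w : V) :
    Γ.dist (e v) (e w) ≤ Γ.dist v w := by
  by_cases hr : Γ.Reachable v w
  · obtain ⟨p, hp⟩ := hr.exists_walk_length_eq_dist
    have hle := Γ.dist_le (p.map ⟨e, fun {a b} hab => (h a b).mp hab⟩)
    rwa [SimpleGraph.Walk.length_map, hp] at hle
  · have hr' : ¬ Γ.Reachable (e v) (e w) := by
      intro hr'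
      apply hr
      have h2 := hr'.map (⟨(e.symm : V → V),
        fun {a b} hab => (h (e.symm a) (e.symm b)).mpr (by simpa using hab)⟩ : Γ →g Γ)
      have h3 : Γ.Reachable (e.symm (e v)) (e.symm (e w)) := h2
      simpa using h3
    rw [SimpleGraph.dist_eq_zero_of_not_reachable hr,
      SimpleGraph.dist_eq_zero_of_not_reachable hr']

private lemma dist_equiv_eq {V : Type*} (Γ : SimpleGraph V) (e : V ≃ V)
    (h : ∀ a b, Γ.Adj a b ↔ Γ.Adj (e a) (e b)) (v w : V) :
    Γ.dist (e v) (e w) = Γ.dist v w := by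
  refine le_antisymm (dist_equiv_le Γ e h v w) ?_
  have h' : ∀ a b, Γ.Adj a b ↔ Γ.Adj (e.symm a) (e.symm b) := by
    intro a b
    rw [h (e.symm a) (e.symm b)]
    simp
  simpa using dist_equiv_le Γ e.symm h' (e v) (e w)

private lemma distPower_adj_equiv {V : Type*} (Γ : SimpleGraph V) (D : Finset ℕ) (e : V ≃ V)
    (h : ∀ a b, Γ.Adj a b ↔ Γ.Adj (e a) (e b)) :
    ∀ a b, (distPower Γ D).Adj a b ↔ (distPower Γ D).Adj (e a) (e b) := by
  intro a b
  show (a ≠ b ∧ Γ.dist a b ∈ D) ↔ (e a ≠ e b ∧ Γ.dist (e a) (e b) ∈ D)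
  exact and_congr (e.injective.ne_iff).symm (by rw [dist_equiv_eq Γ e h a b])

private lemma distPower_dist_equiv {V : Type*} (Γ : SimpleGraph V) (D : Finset ℕ) (e : V ≃ V)
    (h : ∀ a b, Γ.Adj a b ↔ Γ.Adj (e a) (e b)) (v w : V) :
    (distPower Γ D).dist (e v) (e w) = (distPower Γ D).dist v w :=
  dist_equiv_eq _ e (distPower_adj_equiv Γ D e h) v w

/-! ### Characters of finite abelian groups -/

private lemma char_inv {A : Type*} [CommGroup A] (π : A →* ℂ) (a : A) :
    π a⁻¹ = (π a)⁻¹ :=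
  eq_inv_of_mul_eq_one_left (by rw [← map_mul, inv_mul_cancel, map_one])

private lemma char_ne_zero {A : Type*} [CommGroup A] (π : A →* ℂ) (a : A) : π a ≠ 0 := by
  have h : π a * π a⁻¹ = 1 := by rw [← map_mul, mul_inv_cancel, map_one]
  exact left_ne_zero_of_mul_eq_one h

private lemma char_sep {A : Type*} [CommGroup A] [Fintype A] {c : A} (hc : c ≠ 1) :
    ∃ π : A →* ℂ, π c ≠ 1 := by
  haveI : NeZero ((Monoid.exponent A : ℕ) : ℂ) :=
    ⟨Nat.cast_ne_zero.mpr Monoid.exponent_ne_zero_of_finite⟩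
  obtain ⟨φ, hφ⟩ := CommGroup.exists_apply_ne_one_of_hasEnoughRootsOfUnity A ℂ hc
  refine ⟨(Units.coeHom ℂ).comp φ, ?_⟩
  intro hcon
  exact hφ (Units.ext (by simpa using hcon))

private lemma subgroup_sum_int {A : Type*} [CommGroup A] [Fintype A] (π : A →* ℂ)
    (H : Subgroup A) : IsIntC (∑ a ∈ Finset.univ.filter (· ∈ H), π a) := by
  classical
  by_cases hall : ∀ a ∈ H, π a = 1
  · refine ⟨(Finset.univ.filter (· ∈ H)).card, ?_⟩
    rw [Finset.sum_congr rfl fun a ha => hall a (Finset.mem_filter.mp ha).2]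
    simp
  · push_neg at hall
    obtain ⟨b, hbH, hb⟩ := hall
    refine ⟨0, ?_⟩
    have hbij : ∑ a ∈ Finset.univ.filter (· ∈ H), π (b * a)
        = ∑ a ∈ Finset.univ.filter (· ∈ H), π a := by
      refine Finset.sum_equiv (Equiv.mulLeft b) ?_ ?_
      · intro a
        simp only [Finset.mem_filter, Finset.mem_univ, true_and, Equiv.coe_mulLeft]
        exact (mul_mem_cancel_left hbH).symm
      · intro a _
        simp [Equiv.coe_mulLeft]
    have key : π b * ∑ a ∈ Finset.univ.filter (· ∈ H), π a
        = ∑ a ∈ Finset.univ.filter (· ∈ H), π a := by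
      rw [Finset.mul_sum, Finset.sum_congr rfl fun a _ => (map_mul π b a).symm]
      exact hbij
    have hzero : (π b - 1) * ∑ a ∈ Finset.univ.filter (· ∈ H), π a = 0 := by
      rw [sub_mul, one_mul, key, sub_self]
    rcases mul_eq_zero.mp hzero with h | h
    · exact absurd (sub_eq_zero.mp h) hb
    · simpa using h

private lemma atom_sum_int {A : Type*} [CommGroup A] [Fintype A] (π : A →* ℂ) :
    ∀ (n : ℕ) (a : A), (Finset.univ.filter (· ∈ Subgroup.zpowers a)).card = n →
      IsIntC (∑ b ∈ Finset.univ.filter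
        (fun b => Subgroup.zpowers b = Subgroup.zpowers a), π b) := by
  classical
  intro n
  induction n using Nat.strong_induction_on with
  | _ n ih =>
    intro a hcard
    set s := Finset.univ.filter (· ∈ Subgroup.zpowers a) with hs
    have hmaps : ∀ b ∈ s, Subgroup.zpowers b ∈ s.image (fun b => Subgroup.zpowers b) :=
      fun b hb => Finset.mem_image_of_mem _ hb
    have hfib := Finset.sum_fiberwise_of_maps_to hmaps π
    have hasmem : a ∈ s := by simp [hs, Subgroup.mem_zpowers]
    have haim : Subgroup.zpowers a ∈ s.image (fun b => Subgroup.zpowers b) :=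
      Finset.mem_image_of_mem _ hasmem
    have hfiba : s.filter (fun b => Subgroup.zpowers b = Subgroup.zpowers a)
        = Finset.univ.filter (fun b => Subgroup.zpowers b = Subgroup.zpowers a) := by
      ext b
      simp only [hs, Finset.mem_filter, Finset.mem_univ, true_and]
      constructor
      · rintro ⟨_, h2⟩; exact h2
      · intro h2
        exact ⟨h2 ▸ Subgroup.mem_zpowers b, h2⟩
    have hT : (∑ b ∈ Finset.univ.filter
          (fun b => Subgroup.zpowers b = Subgroup.zpowers a), π b)
        = (∑ b ∈ s, π b) -
          ∑ H ∈ (s.image (fun b => Subgroup.zpowers b)).erase (Subgroup.zpowers a),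
            ∑ b ∈ s.filter (fun b => Subgroup.zpowers b = H), π b := by
      rw [← hfiba, eq_sub_iff_add_eq, ← hfib,
        Finset.add_sum_erase _ (fun H => ∑ b ∈ s.filter
          (fun b => Subgroup.zpowers b = H), π b) haim]
    rw [hT]
    refine IsIntC.sub ?_ ?_
    · exact subgroup_sum_int π (Subgroup.zpowers a)
    · refine IsIntC.sum _ _ fun H hH => ?_
      obtain ⟨hHne, hHim⟩ := Finset.mem_erase.mp hH
      obtain ⟨c, hcs, rfl⟩ := Finset.mem_image.mp hHim
      have hcz : Subgroup.zpowers c ≤ Subgroup.zpowers a :=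
        Subgroup.zpowers_le.mpr (by simpa [hs] using hcs)
      have hfibc : s.filter (fun b => Subgroup.zpowers b = Subgroup.zpowers c)
          = Finset.univ.filter (fun b => Subgroup.zpowers b = Subgroup.zpowers c) := by
        ext b
        simp only [hs, Finset.mem_filter, Finset.mem_univ, true_and]
        constructor
        · rintro ⟨_, h2⟩; exact h2
        · intro h2
          exact ⟨hcz (h2 ▸ Subgroup.mem_zpowers b), h2⟩
      rw [hfibc]
      refine ih ((Finset.univ.filter (· ∈ Subgroup.zpowers c)).card) ?_ c rfl
      rw [← hcard]
      apply Finset.card_lt_card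
      rw [Finset.ssubset_iff_subset_ne]
      constructor
      · intro b hb
        simp only [hs, Finset.mem_filter, Finset.mem_univ, true_and] at hb ⊢
        exact hcz hb
      · intro hEq
        apply hHne
        have haz : a ∈ Subgroup.zpowers c := by
          have : a ∈ Finset.univ.filter (· ∈ Subgroup.zpowers c) := by
            rw [hEq]; exact hasmem
          simpa using this
        exact le_antisymm hcz (Subgroup.zpowers_le.mpr haz)

private lemma weighted_sum_int {A : Type*} [CommGroup A] [Fintype A] (π : A →* ℂ) (w : A → ℕ)
    (hw : ∀ a b : A, Subgroup.zpowers a = Subgroup.zpowers b → w a = w b) :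
    IsIntC (∑ a : A, (w a : ℂ) * π a) := by
  classical
  have hmaps : ∀ b ∈ (Finset.univ : Finset A),
      Subgroup.zpowers b ∈ Finset.univ.image (fun b : A => Subgroup.zpowers b) :=
    fun b _ => Finset.mem_image_of_mem _ (Finset.mem_univ b)
  rw [← Finset.sum_fiberwise_of_maps_to hmaps (fun a => (w a : ℂ) * π a)]
  refine IsIntC.sum _ _ fun H hH => ?_
  obtain ⟨c, -, rfl⟩ := Finset.mem_image.mp hH
  have hcongr : ∀ b ∈ Finset.univ.filter
      (fun b : A => Subgroup.zpowers b = Subgroup.zpowers c),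
      (w b : ℂ) * π b = (w c : ℂ) * π b := fun b hb => by
    rw [hw b c (Finset.mem_filter.mp hb).2]
  rw [Finset.sum_congr rfl hcongr, ← Finset.mul_sum]
  exact (IsIntC.natCast (w c)).mul (atom_sum_int π _ c rfl)

private lemma char_span_top (A : Type*) [CommGroup A] [Fintype A] :
    Submodule.span ℂ (Set.range (fun π : A →* ℂ => ⇑π)) = ⊤ := by
  classical
  set W := Submodule.span ℂ (Set.range (fun π : A →* ℂ => ⇑π)) with hWdef
  have hmemπ : ∀ π : A →* ℂ, ⇑π ∈ W := fun π => Submodule.subset_span ⟨π, rfl⟩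
  have hone : (fun _ : A => (1 : ℂ)) ∈ W := hmemπ 1
  have hconst : ∀ z : ℂ, (fun _ : A => z) ∈ W := fun z => by
    have h2 : (fun _ : A => z) = z • (fun _ : A => (1 : ℂ)) := by funext c; simp
    rw [h2]
    exact W.smul_mem z hone
  have hmul : ∀ f ∈ W, ∀ g ∈ W, f * g ∈ W := by
    intro f hf
    induction hf using Submodule.span_induction with
    | mem f hfm =>
      intro g hg
      induction hg using Submodule.span_induction with
      | mem g hgm =>
        obtain ⟨π, rfl⟩ := hfm
        obtain ⟨ρ, rfl⟩ := hgm
        exact Submodule.subset_span ⟨π * ρ, by funext a; simp⟩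
      | zero => simpa using W.zero_mem
      | add g₁ g₂ hg₁ hg₂ ih₁ ih₂ => rw [mul_add]; exact W.add_mem ih₁ ih₂
      | smul c g hg ih => rw [mul_smul_comm]; exact W.smul_mem c ih
    | zero => intro g hg; simpa using W.zero_mem
    | add f₁ f₂ h₁ h₂ ih₁ ih₂ => intro g hg; rw [add_mul]; exact W.add_mem (ih₁ g hg) (ih₂ g hg)
    | smul c f h ih => intro g hg; rw [smul_mul_assoc]; exact W.smul_mem c (ih g hg)
  have hsingle : ∀ a₀ : A, (Pi.single a₀ (1 : ℂ) : A → ℂ) ∈ W := by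
    intro a₀
    have hfac : ∀ b : A, ∃ f, f ∈ W ∧ f a₀ = 1 ∧ (b ≠ a₀ → f b = 0) := by
      intro b
      by_cases hb : b = a₀
      · exact ⟨fun _ => 1, hone, rfl, fun h => absurd hb h⟩
      · obtain ⟨π, hπ⟩ := char_sep (c := b⁻¹ * a₀)
          (by
            intro hcon
            exact hb (by rwa [inv_mul_eq_one] at hcon))
        have hb0 : π b ≠ 0 := char_ne_zero π b
        have hne : π a₀ ≠ π b := by
          intro hEq
          apply hπ
          rw [map_mul, char_inv, hEq, inv_mul_cancel₀ hb0]
        refine ⟨fun c => (π a₀ - π b)⁻¹ * (π c - π b), ?_, ?_, ?_⟩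
        · have hrepr : (fun c => (π a₀ - π b)⁻¹ * (π c - π b))
              = (π a₀ - π b)⁻¹ • (⇑π + fun _ : A => -π b) := by
            funext c
            simp only [Pi.smul_apply, Pi.add_apply, smul_eq_mul]
            ring
          rw [hrepr]
          exact W.smul_mem _ (W.add_mem (hmemπ π) (hconst (-π b)))
        · exact inv_mul_cancel₀ (sub_ne_zero.mpr hne)
        · intro _; simp
    choose f hfW hf1 hf0 using hfac
    have hprod : (∏ b ∈ Finset.univ.erase a₀, f b) ∈ W := by
      refine Finset.prod_induction f (· ∈ W) (fun x y hx hy => hmul x hx y hy) hone ?_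
      exact fun b _ => hfW b
    have heq : (∏ b ∈ Finset.univ.erase a₀, f b) = Pi.single a₀ 1 := by
      funext c
      rw [Finset.prod_apply]
      by_cases hc : c = a₀
      · subst hc
        rw [Pi.single_eq_same]
        exact Finset.prod_eq_one fun b _ => hf1 b
      · rw [Pi.single_eq_of_ne hc]
        exact Finset.prod_eq_zero (Finset.mem_erase.mpr ⟨hc, Finset.mem_univ c⟩) (hf0 c hc)
    rw [← heq]
    exact hprod
  rw [eq_top_iff]
  rintro v -
  have hv : v = ∑ a : A, v a • (Pi.single a (1 : ℂ) : A → ℂ) := by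
    funext c
    rw [Finset.sum_apply]
    rw [Finset.sum_eq_single c
      (fun b _ hb => by simp [Pi.single_eq_of_ne (Ne.symm hb)])
      (fun h => absurd (Finset.mem_univ c) h)]
    simp
  rw [hv]
  exact Submodule.sum_mem _ fun a _ => W.smul_mem _ (hsingle a)

/-! ### Power maps -/

private lemma exists_pow_pair {A : Type*} [CommGroup A] [Fintype A] (y : A)
    (hy2 : orderOf y = 2) {a b : A} (h : Subgroup.zpowers a = Subgroup.zpowers b) :
    ∃ k m : ℕ, (∀ c : A, (c ^ k) ^ m = c) ∧ a ^ k = b ∧ y ^ k = y := by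
  classical
  set e := Monoid.exponent A with he
  haveI : NeZero (Monoid.exponent A) := ⟨Monoid.exponent_ne_zero_of_finite⟩
  haveI : NeZero (orderOf a) := ⟨(orderOf_pos a).ne'⟩
  have hb : b ∈ Subgroup.zpowers a := h ▸ Subgroup.mem_zpowers b
  have ha : a ∈ Subgroup.zpowers b := h ▸ Subgroup.mem_zpowers a
  obtain ⟨j, hj⟩ := Submonoid.mem_powers_iff b _ |>.mp (mem_powers_iff_mem_zpowers.mpr hb)
  obtain ⟨i, hi⟩ := Submonoid.mem_powers_iff a _ |>.mp (mem_powers_iff_mem_zpowers.mpr ha)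
  have hji : j * i ≡ 1 [MOD orderOf a] := by
    have hpow : a ^ (j * i) = a ^ 1 := by rw [pow_mul, hj, hi, pow_one]
    exact pow_eq_pow_iff_modEq.mp hpow
  have hcast : ((j : ZMod (orderOf a)) * (i : ZMod (orderOf a)) = 1) := by
    have := (ZMod.natCast_eq_natCast_iff _ _ _).mpr hji
    push_cast at this
    exact this
  set uj : (ZMod (orderOf a))ˣ :=
    ⟨(j : ZMod (orderOf a)), (i : ZMod (orderOf a)), hcast, by rwa [mul_comm] at hcast⟩ with huj
  obtain ⟨u, hu⟩ := ZMod.unitsMap_surjective (Monoid.order_dvd_exponent a) uj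
  refine ⟨((u : ZMod e)).val, (((u⁻¹ : (ZMod e)ˣ) : ZMod e)).val, ?_, ?_, ?_⟩
  · -- (c ^ k) ^ m = c
    have hkm1 : (u : ZMod e).val * ((u⁻¹ : (ZMod e)ˣ) : ZMod e).val ≡ 1 [MOD e] := by
      have hv : (((u : ZMod e).val * ((u⁻¹ : (ZMod e)ˣ) : ZMod e).val : ℕ) : ZMod e)
          = ((1 : ℕ) : ZMod e) := by
        push_cast
        rw [ZMod.natCast_val, ZMod.natCast_val, ZMod.cast_id, ZMod.cast_id]
        simpa using u.mul_inv
      exact (ZMod.natCast_eq_natCast_iff _ _ _).mp hv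
    intro c
    rw [← pow_mul]
    have hc : (u : ZMod e).val * ((u⁻¹ : (ZMod e)ˣ) : ZMod e).val ≡ 1 [MOD orderOf c] :=
      hkm1.of_dvd (Monoid.order_dvd_exponent c)
    calc c ^ ((u : ZMod e).val * ((u⁻¹ : (ZMod e)ˣ) : ZMod e).val)
        = c ^ 1 := pow_eq_pow_iff_modEq.mpr hc
      _ = c := pow_one c
  · -- a ^ k = b
    have hk : (((u : ZMod e).val : ℕ) : ZMod (orderOf a)) = (j : ZMod (orderOf a)) := by
      have h1 : (((u : ZMod e).val : ℕ) : ZMod (orderOf a))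
          = ZMod.castHom (Monoid.order_dvd_exponent a) (ZMod (orderOf a))
            (((u : ZMod e).val : ℕ) : ZMod e) := by
        rw [map_natCast]
      rw [h1, ZMod.natCast_val, ZMod.cast_id]
      have h2 := congrArg (fun w : (ZMod (orderOf a))ˣ => (w : ZMod (orderOf a))) hu
      simpa [ZMod.unitsMap, huj] using h2
    have hmod : (u : ZMod e).val ≡ j [MOD orderOf a] :=
      (ZMod.natCast_eq_natCast_iff _ _ _).mp hk
    calc a ^ (u : ZMod e).val = a ^ j := pow_eq_pow_iff_modEq.mpr hmod
      _ = b := hj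
  · -- y ^ k = y
    have hcop : Nat.Coprime (u : ZMod e).val e := ZMod.val_coe_unit_coprime u
    have h2e : (2 : ℕ) ∣ e := hy2 ▸ Monoid.order_dvd_exponent y
    have hodd : Odd (u : ZMod e).val := (Nat.coprime_two_right).mp (hcop.coprime_dvd_right h2e)
    have hmod : (u : ZMod e).val ≡ 1 [MOD orderOf y] := by
      rw [hy2]
      show (u : ZMod e).val % 2 = 1 % 2
      rw [Nat.odd_iff.mp hodd]
    calc y ^ (u : ZMod e).val = y ^ 1 := pow_eq_pow_iff_modEq.mpr hmod
      _ = y := pow_one y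

private lemma inBoolAlg_pow_iff {A : Type*} [CommGroup A] {S : Set A} (hS : InBoolAlg A S)
    {k m : ℕ} (hkm : ∀ c : A, (c ^ k) ^ m = c) : ∀ a, a ∈ S ↔ a ^ k ∈ S := by
  induction hS with
  | subgroup H =>
    intro a
    constructor
    · intro haH
      exact H.pow_mem haH k
    · intro haH
      have hm := H.pow_mem haH m
      rwa [hkm a] at hm
  | compl hs ih => intro a; simp only [Set.mem_compl_iff]; rw [ih a]
  | union hs ht ihs iht => intro a; simp only [Set.mem_union]; rw [ihs a, iht a]
  | inter hs ht ihs iht => intro a; simp only [Set.mem_inter_iff]; rw [ihs a, iht a]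

/-! ### Dic-specific lemmas -/

section DicLemmas

variable {A : Type*} [CommGroup A] {y : A} {hy : y * y = 1}

private lemma dic_x_mul_ofA (a : A) :
    Dic.x A y hy * Dic.ofA a = (⟨true, a⟩ : Dic A y hy) := by
  ext <;> simp [Dic.x, Dic.ofA]

private lemma Rpi_false (π : A →* ℂ) (a : A) :
    Rpi (hy := hy) π ⟨false, a⟩ = !![π a, 0; 0, (π a)⁻¹] := by
  simp [Rpi, char_inv]

private lemma Rpi_true (π : A →* ℂ) (a : A) :
    Rpi (hy := hy) π ⟨true, a⟩ = !![0, π y * (π a)⁻¹; π a, 0] := by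
  simp [Rpi, char_inv, Matrix.mul_fin_two]

private lemma Rpi_mul (π : A →* ℂ) (g h : Dic A y hy) :
    Rpi π (g * h) = Rpi π g * Rpi π h := by
  have hπy : π y * π y = 1 := by rw [← map_mul, hy, map_one]
  have hπyinv : (π y)⁻¹ = π y := inv_eq_of_mul_eq_one_right hπy
  obtain ⟨tg, ag⟩ := g
  obtain ⟨th, ah⟩ := h
  cases tg <;> cases th
  · rw [show ((⟨false, ag⟩ : Dic A y hy) * ⟨false, ah⟩) = ⟨false, ag * ah⟩ by ext <;> simp]
    rw [Rpi_false, Rpi_false, Rpi_false]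
    ext i j
    fin_cases i <;> fin_cases j <;>
      simp [Matrix.mul_apply, Fin.sum_univ_two, map_mul, mul_inv] <;> ring
  · rw [show ((⟨false, ag⟩ : Dic A y hy) * ⟨true, ah⟩) = ⟨true, ag⁻¹ * ah⟩ by ext <;> simp]
    rw [Rpi_true, Rpi_false, Rpi_true]
    ext i j
    fin_cases i <;> fin_cases j <;>
      simp [Matrix.mul_apply, Fin.sum_univ_two, map_mul, mul_inv, char_inv] <;> ring
  · rw [show ((⟨true, ag⟩ : Dic A y hy) * ⟨false, ah⟩) = ⟨true, ag * ah⟩ by ext <;> simp]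
    rw [Rpi_true, Rpi_true, Rpi_false]
    ext i j
    fin_cases i <;> fin_cases j <;>
      simp [Matrix.mul_apply, Fin.sum_univ_two, map_mul, mul_inv, char_inv] <;> ring
  · rw [show ((⟨true, ag⟩ : Dic A y hy) * ⟨true, ah⟩) = ⟨false, ag⁻¹ * ah * y⟩ by ext <;> simp]
    rw [Rpi_false, Rpi_true, Rpi_true]
    ext i j
    fin_cases i <;> fin_cases j <;>
      simp [Matrix.mul_apply, Fin.sum_univ_two, map_mul, mul_inv, char_inv, hπyinv] <;> ring

private def dicE (A : Type*) [CommGroup A] (y : A) (hy : y * y = 1) :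
    Bool × A ≃ Dic A y hy where
  toFun p := ⟨p.1, p.2⟩
  invFun g := (g.t, g.a)
  left_inv _ := rfl
  right_inv _ := rfl

private lemma dic_sum {A : Type*} [CommGroup A] [Fintype A] {y : A} {hy : y * y = 1}
    {M : Type*} [AddCommMonoid M] (f : Dic A y hy → M) :
    ∑ g : Dic A y hy, f g = (∑ a : A, f ⟨false, a⟩) + ∑ a : A, f ⟨true, a⟩ := by
  rw [← Equiv.sum_comp (dicE A y hy) f, Fintype.sum_prod_type, Fintype.sum_bool]
  exact add_comm _ _

end DicLemmas

private lemma mulVec2 (M : Matrix (Fin 2) (Fin 2) ℂ) (v : Fin 2 → ℂ) (i : Fin 2) :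
    M.mulVec v i = M i 0 * v 0 + M i 1 * v 1 := by
  simp [Matrix.mulVec, dotProduct, Fin.sum_univ_two]

private lemma mulVec_apply {n : Type*} [Fintype n] (M : Matrix n n ℂ) (v : n → ℂ) (i : n) :
    M.mulVec v i = ∑ j, M i j * v j := rfl

end AuxHelpers

/-- Corollary 6.2: for `S₁ ⊆ A` with `1 ∉ S₁`, `S₁ ∈ B(A)`, `⟨S₁⟩ = A`,
and a non-empty finite set `D` of positive integers such that the distance power
`Cay(Dic(A,y), S₁ ∪ x{1,y})^D` is connected, this distance power is a Cayley graph over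
`Dic(A,y)` which is distance integral. -/
theorem dic_special_distance_power_distance_integral {A : Type*} [CommGroup A] [Fintype A]
    (hA : Even (Fintype.card A)) (hexp : 3 ≤ Monoid.exponent A)
    (y : A) (hy : y * y = 1) (hy1 : y ≠ 1)
    (S₁ : Set A) (h1S₁ : (1 : A) ∉ S₁) (hS₁ : InBoolAlg A S₁)
    (hgen₁ : Subgroup.closure S₁ = ⊤)
    (D : Finset ℕ) (hD : D.Nonempty) (hDpos : ∀ d ∈ D, 0 < d)
    (S : Set (Dic A y hy))
    (hS : S = Dic.ofA '' S₁ ∪ (fun a => Dic.x A y hy * Dic.ofA a) '' ({1, y} : Set A))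
    (hconn : (distPower (cayley S) D).Connected) :
    (∃ SD : Set (Dic A y hy),
      (1 : Dic A y hy) ∉ SD ∧ SD⁻¹ = SD ∧ distPower (cayley S) D = cayley SD) ∧
    IsDistanceIntegral (distPower (cayley S) D) := by
  classical
  set Γ : SimpleGraph (Dic A y hy) := cayley S with hΓdef
  -- left-translation invariance of the Cayley adjacency
  have hadj : ∀ g a b : Dic A y hy, Γ.Adj a b ↔ Γ.Adj (g * a) (g * b) := by
    intro g a b
    rw [hΓdef, cayley, SimpleGraph.fromRel_adj, SimpleGraph.fromRel_adj]
    have h1 : (g * a)⁻¹ * (g * b) = a⁻¹ * b := by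
      rw [mul_inv_rev, mul_assoc, inv_mul_cancel_left]
    have h2 : (g * b)⁻¹ * (g * a) = b⁻¹ * a := by
      rw [mul_inv_rev, mul_assoc, inv_mul_cancel_left]
    rw [h1, h2]
    exact and_congr (not_congr (mul_right_inj g)).symm Iff.rfl
  have hgdist : ∀ g v w : Dic A y hy, Γ.dist (g * v) (g * w) = Γ.dist v w := fun g v w =>
    dist_equiv_eq Γ (Equiv.mulLeft g) (fun a b => by simpa using hadj g a b) v w
  have hPdist : ∀ g v w : Dic A y hy,
      (distPower Γ D).dist (g * v) (g * w) = (distPower Γ D).dist v w := fun g v w =>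
    distPower_dist_equiv Γ D (Equiv.mulLeft g) (fun a b => by simpa using hadj g a b) v w
  have hΓnorm : ∀ v w : Dic A y hy, Γ.dist v w = Γ.dist 1 (v⁻¹ * w) := by
    intro v w
    have h1 := hgdist v 1 (v⁻¹ * w)
    rw [mul_one, mul_inv_cancel_left] at h1
    exact h1
  have hPnorm : ∀ v w : Dic A y hy,
      (distPower Γ D).dist v w = (distPower Γ D).dist 1 (v⁻¹ * w) := by
    intro v w
    have h1 := hPdist v 1 (v⁻¹ * w)
    rw [mul_one, mul_inv_cancel_left] at h1
    exact h1
  have hΓinv : ∀ g : Dic A y hy, Γ.dist 1 g⁻¹ = Γ.dist 1 g := by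
    intro g
    have h1 := hgdist g 1 g⁻¹
    rw [mul_one, mul_inv_cancel] at h1
    rw [← h1, SimpleGraph.dist_comm]
  have hPinv : ∀ g : Dic A y hy, (distPower Γ D).dist 1 g⁻¹ = (distPower Γ D).dist 1 g := by
    intro g
    have h1 := hPdist g 1 g⁻¹
    rw [mul_one, mul_inv_cancel] at h1
    rw [← h1, SimpleGraph.dist_comm]
  constructor
  · -- the distance power is a Cayley graph
    refine ⟨{g : Dic A y hy | g ≠ 1 ∧ Γ.dist 1 g ∈ D}, by simp, ?_, ?_⟩
    · ext g
      simp only [Set.mem_inv, Set.mem_setOf_eq, ne_eq, inv_eq_one]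
      rw [hΓinv g]
    · ext v w
      show (v ≠ w ∧ Γ.dist v w ∈ D) ↔ _
      rw [cayley, SimpleGraph.fromRel_adj]
      simp only [Set.mem_setOf_eq]
      constructor
      · rintro ⟨hvw, hd⟩
        refine ⟨hvw, Or.inl ⟨?_, ?_⟩⟩
        · simpa [ne_eq, inv_mul_eq_one] using hvw
        · rw [← hΓnorm]; exact hd
      · rintro ⟨hvw, h | h⟩
        · exact ⟨hvw, by rw [hΓnorm]; exact h.2⟩
        · refine ⟨hvw, ?_⟩
          rw [SimpleGraph.dist_comm, hΓnorm]
          exact h.2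
  · -- distance integrality
    intro μ hμ
    by_contra hcon
    push_neg at hcon
    set dP : Dic A y hy → ℕ := fun g => (distPower Γ D).dist 1 g with hdP
    set Mc : Matrix (Dic A y hy) (Dic A y hy) ℂ :=
      Matrix.of (fun g h => (((distPower Γ D).dist g h : ℕ) : ℂ)) with hMcdef
    have hMcapp : ∀ g h : Dic A y hy, Mc g h = ((dP (g⁻¹ * h) : ℕ) : ℂ) := by
      intro g h
      simp only [hMcdef, Matrix.of_apply, hdP]
      rw [hPnorm g h]
    have hMcsym : ∀ g h : Dic A y hy, Mc g h = Mc h g := by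
      intro g h
      simp only [hMcdef, Matrix.of_apply]
      rw [SimpleGraph.dist_comm]
    -- a complex eigenvector for μ
    obtain ⟨u, hune, hueq⟩ : ∃ u : Dic A y hy → ℂ, u ≠ 0 ∧ Mc.mulVec u = (μ : ℂ) • u := by
      have h1 : ¬IsUnit (algebraMap ℝ (Matrix (Dic A y hy) (Dic A y hy) ℝ) μ
          - distMatrix (distPower Γ D)) := spectrum.mem_iff.mp hμ
      rw [Matrix.isUnit_iff_isUnit_det, isUnit_iff_ne_zero, not_not] at h1
      have h2 : (((algebraMap ℝ (Matrix (Dic A y hy) (Dic A y hy) ℝ) μ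
          - distMatrix (distPower Γ D)).map (algebraMap ℝ ℂ))).det = 0 := by
        rw [← RingHom.mapMatrix_apply, ← RingHom.map_det, h1, map_zero]
      have h3 : (algebraMap ℝ (Matrix (Dic A y hy) (Dic A y hy) ℝ) μ
          - distMatrix (distPower Γ D)).map (algebraMap ℝ ℂ)
          = (μ : ℂ) • (1 : Matrix (Dic A y hy) (Dic A y hy) ℂ) - Mc := by
        ext g h
        simp only [Matrix.map_apply, Matrix.sub_apply, Matrix.smul_apply, Matrix.one_apply,
          Matrix.algebraMap_matrix_apply, distMatrix, Matrix.of_apply, hMcdef, smul_eq_mul]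
        by_cases hgh : g = h <;> simp [hgh]
      obtain ⟨u, hu0, huz⟩ := Matrix.exists_mulVec_eq_zero_iff.mpr (by rw [h3] at h2; exact h2)
      refine ⟨u, hu0, ?_⟩
      rw [Matrix.sub_mulVec, Matrix.smul_mulVec, Matrix.one_mulVec, sub_eq_zero] at huz
      exact huz.symm
    have horder_y : orderOf y = 2 := orderOf_eq_prime (by rwa [pow_two]) hy1
    -- normal form of membership in S
    have hSmem : ∀ g : Dic A y hy,
        g ∈ S ↔ ((g.t = false ∧ g.a ∈ S₁) ∨ (g.t = true ∧ (g.a = 1 ∨ g.a = y))) := by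
      intro g
      rw [hS]
      simp only [Set.mem_union, Set.mem_image, Set.mem_insert_iff, Set.mem_singleton_iff]
      constructor
      · rintro (⟨a, haS, rfl⟩ | ⟨a, ha, rfl⟩)
        · exact Or.inl ⟨rfl, haS⟩
        · rw [dic_x_mul_ofA]
          exact Or.inr ⟨rfl, ha⟩
      · rintro (⟨ht, ha⟩ | ⟨ht, ha⟩)
        · refine Or.inl ⟨g.a, ha, ?_⟩
          ext
          · exact ht.symm
          · rfl
        · refine Or.inr ⟨g.a, ha, ?_⟩
          rw [dic_x_mul_ofA]
          ext
          · exact ht.symm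
          · rfl
    -- atom-constancy of dP
    have hatom : ∀ (t : Bool) (a b : A), Subgroup.zpowers a = Subgroup.zpowers b →
        dP ⟨t, a⟩ = dP ⟨t, b⟩ := by
      intro t a b hab
      obtain ⟨k, m, hkm, hak, hyk⟩ := exists_pow_pair y horder_y hab
      have hkm' : ∀ c : A, (c ^ m) ^ k = c := by
        intro c
        rw [← pow_mul, mul_comm, pow_mul]
        exact hkm c
      have hym : y ^ m = y := by
        have h1 := hkm y
        rwa [hyk] at h1
      have hS₁k : ∀ c : A, c ∈ S₁ ↔ c ^ k ∈ S₁ := inBoolAlg_pow_iff hS₁ hkm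
      set e : Dic A y hy ≃ Dic A y hy :=
        { toFun := fun g => ⟨g.t, g.a ^ k⟩
          invFun := fun g => ⟨g.t, g.a ^ m⟩
          left_inv := fun g => by
            ext
            · rfl
            · exact hkm g.a
          right_inv := fun g => by
            ext
            · rfl
            · exact hkm' g.a } with heq
      have heC : ∀ g : Dic A y hy, e g = ⟨g.t, g.a ^ k⟩ := fun g => rfl
      have hemul : ∀ g h : Dic A y hy, e (g * h) = e g * e h := by
        intro g h
        rw [heC, heC, heC]
        ext
        · rfl
        · show ((if h.t then g.a⁻¹ else g.a) * h.a * (if g.t && h.t then y else 1)) ^ k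
            = (if h.t then (g.a ^ k)⁻¹ else g.a ^ k) * h.a ^ k * (if g.t && h.t then y else 1)
          cases hht : h.t <;> cases hgt : g.t <;>
            simp [mul_pow, inv_pow, hyk]
      have he1 : e 1 = 1 := by
        rw [heC]
        ext
        · rfl
        · exact one_pow k
      have heinv : ∀ g : Dic A y hy, e g⁻¹ = (e g)⁻¹ := by
        intro g
        have h1 : e g⁻¹ * e g = 1 := by rw [← hemul, inv_mul_cancel, he1]
        exact eq_inv_of_mul_eq_one_left h1
      have heS : ∀ g : Dic A y hy, g ∈ S ↔ e g ∈ S := by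
        intro g
        rw [hSmem g, hSmem (e g), heC]
        constructor
        · rintro (⟨ht, ha⟩ | ⟨ht, ha⟩)
          · exact Or.inl ⟨ht, (hS₁k g.a).mp ha⟩
          · refine Or.inr ⟨ht, ?_⟩
            rcases ha with h1 | h1
            · left; rw [h1, one_pow]
            · right; rw [h1, hyk]
        · rintro (⟨ht, ha⟩ | ⟨ht, ha⟩)
          · exact Or.inl ⟨ht, (hS₁k g.a).mpr ha⟩
          · refine Or.inr ⟨ht, ?_⟩
            rcases ha with h1 | h1
            · left
              have h2 := congrArg (· ^ m) h1
              simpa [hkm g.a] using h2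
            · right
              have h2 := congrArg (· ^ m) h1
              simp only at h2
              rwa [hkm g.a, hym] at h2
      have headj : ∀ v w : Dic A y hy, Γ.Adj v w ↔ Γ.Adj (e v) (e w) := by
        intro v w
        rw [hΓdef, cayley, SimpleGraph.fromRel_adj, SimpleGraph.fromRel_adj]
        have hinv1 : (e v)⁻¹ * e w = e (v⁻¹ * w) := by rw [← heinv, ← hemul]
        have hinv2 : (e w)⁻¹ * e v = e (w⁻¹ * v) := by rw [← heinv, ← hemul]
        rw [hinv1, hinv2]
        exact and_congr (e.injective.ne_iff).symm
          (or_congr (heS (v⁻¹ * w)) (heS (w⁻¹ * v)))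
      have hfin := distPower_dist_equiv Γ D e headj 1 ⟨t, a⟩
      rw [he1] at hfin
      have h2 : e ⟨t, a⟩ = (⟨t, b⟩ : Dic A y hy) := by
        rw [heC]
        ext
        · rfl
        · exact hak
      rw [h2] at hfin
      exact hfin.symm
    have hdPinv : ∀ g : Dic A y hy, dP g⁻¹ = dP g := hPinv
    have hinvA : ∀ (t : Bool) (a : A), dP ⟨t, a⁻¹⟩ = dP ⟨t, a⟩ := fun t a =>
      hatom t a⁻¹ a Subgroup.zpowers_inv
    have hyA : ∀ a : A, dP ⟨true, y * a⟩ = dP ⟨true, a⟩ := by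
      intro a
      have h1 : (⟨true, a⟩ : Dic A y hy)⁻¹ = ⟨true, y * a⟩ := rfl
      rw [← h1]
      exact hdPinv ⟨true, a⟩
    -- the set of eigenfunctions with integer eigenvalues
    set Evs : Set (Dic A y hy → ℂ) := {f | ∃ kz : ℤ, Mc.mulVec f = (kz : ℂ) • f} with hEvs
    -- the two basic coset functions attached to a character lie in the span of Evs
    have hπblock : ∀ π : A →* ℂ,
        ((fun g : Dic A y hy => if g.t then 0 else π g.a) ∈ Submodule.span ℂ Evs) ∧
        ((fun g : Dic A y hy => if g.t then π g.a else 0) ∈ Submodule.span ℂ Evs) := by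
      intro π
      set α : ℂ := ∑ a : A, ((dP ⟨false, a⟩ : ℕ) : ℂ) * π a with hα
      set β : ℂ := ∑ a : A, ((dP ⟨true, a⟩ : ℕ) : ℂ) * π a with hβ
      have hαint : IsIntC α := weighted_sum_int π (fun a => dP ⟨false, a⟩)
        (fun a b h => hatom false a b h)
      have hβint : IsIntC β := weighted_sum_int π (fun a => dP ⟨true, a⟩)
        (fun a b h => hatom true a b h)
      have hαinv : ∑ a : A, ((dP ⟨false, a⟩ : ℕ) : ℂ) * (π a)⁻¹ = α := by
        rw [hα, ← Equiv.sum_comp (Equiv.inv A)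
          (fun a => ((dP ⟨false, a⟩ : ℕ) : ℂ) * π a)]
        refine Finset.sum_congr rfl fun a _ => ?_
        simp only [Equiv.inv_apply]
        rw [hinvA, char_inv]
      have hβinv : ∑ a : A, ((dP ⟨true, a⟩ : ℕ) : ℂ) * (π a)⁻¹ = β := by
        rw [hβ, ← Equiv.sum_comp (Equiv.inv A)
          (fun a => ((dP ⟨true, a⟩ : ℕ) : ℂ) * π a)]
        refine Finset.sum_congr rfl fun a _ => ?_
        simp only [Equiv.inv_apply]
        rw [hinvA, char_inv]
      have hβy : π y * β = β := by
        conv_rhs => rw [hβ, ← Equiv.sum_comp (Equiv.mulLeft y)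
          (fun a => ((dP ⟨true, a⟩ : ℕ) : ℂ) * π a)]
        rw [hβ, Finset.mul_sum]
        refine Finset.sum_congr rfl fun a _ => ?_
        simp only [Equiv.coe_mulLeft]
        rw [hyA, map_mul]
        ring
      have hπy2 : π y = 1 ∨ π y = -1 :=
        mul_self_eq_one_iff.mp (by rw [← map_mul, hy, map_one])
      -- the key weighted sums of representation matrices
      have hwvec0 : ∀ v : Fin 2 → ℂ,
          (∑ g : Dic A y hy, ((dP g : ℕ) : ℂ) * ((Rpi π g).mulVec v 0))
          = α * v 0 + π y * β * v 1 := by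
        intro v
        rw [dic_sum]
        have hf : ∑ a : A, ((dP (⟨false, a⟩ : Dic A y hy) : ℕ) : ℂ)
              * ((Rpi π (⟨false, a⟩ : Dic A y hy)).mulVec v 0)
            = v 0 * α := by
          rw [hα, Finset.mul_sum]
          refine Finset.sum_congr rfl fun a _ => ?_
          rw [Rpi_false, mulVec2]
          simp
          try ring
        have ht : ∑ a : A, ((dP (⟨true, a⟩ : Dic A y hy) : ℕ) : ℂ)
              * ((Rpi π (⟨true, a⟩ : Dic A y hy)).mulVec v 0)
            = π y * v 1 * β := by
          rw [← hβinv, Finset.mul_sum]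
          refine Finset.sum_congr rfl fun a _ => ?_
          rw [Rpi_true, mulVec2]
          simp
          try ring
        rw [hf, ht]
        ring
      have hwvec1 : ∀ v : Fin 2 → ℂ,
          (∑ g : Dic A y hy, ((dP g : ℕ) : ℂ) * ((Rpi π g).mulVec v 1))
          = β * v 0 + α * v 1 := by
        intro v
        rw [dic_sum]
        have hf : ∑ a : A, ((dP (⟨false, a⟩ : Dic A y hy) : ℕ) : ℂ)
              * ((Rpi π (⟨false, a⟩ : Dic A y hy)).mulVec v 1)
            = v 1 * α := by
          rw [← hαinv, Finset.mul_sum]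
          refine Finset.sum_congr rfl fun a _ => ?_
          rw [Rpi_false, mulVec2]
          simp
          try ring
        have ht : ∑ a : A, ((dP (⟨true, a⟩ : Dic A y hy) : ℕ) : ℂ)
              * ((Rpi π (⟨true, a⟩ : Dic A y hy)).mulVec v 1)
            = v 0 * β := by
          rw [hβ, Finset.mul_sum]
          refine Finset.sum_congr rfl fun a _ => ?_
          rw [Rpi_true, mulVec2]
          simp
          try ring
        rw [hf, ht]
        ring
      -- eigenfunction production
      have heig : ∀ (v : Fin 2 → ℂ) (lam : ℂ),
          α * v 0 + π y * β * v 1 = lam * v 0 →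
          β * v 0 + α * v 1 = lam * v 1 →
          ∀ i : Fin 2, Mc.mulVec (fun g => (Rpi π g).mulVec v i)
            = lam • (fun g => (Rpi π g).mulVec v i) := by
        intro v lam hv0 hv1 i
        funext g
        show ∑ h, Mc g h * ((Rpi π h).mulVec v i) = lam * ((Rpi π g).mulVec v i)
        calc ∑ h, Mc g h * ((Rpi π h).mulVec v i)
            = ∑ w : Dic A y hy, Mc g (g * w) * ((Rpi π (g * w)).mulVec v i) :=
              (Equiv.sum_comp (Equiv.mulLeft g)
                (fun h => Mc g h * ((Rpi π h).mulVec v i))).symm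
          _ = ∑ w : Dic A y hy, ((dP w : ℕ) : ℂ)
                * ((Rpi π g) i 0 * ((Rpi π w).mulVec v 0)
                  + (Rpi π g) i 1 * ((Rpi π w).mulVec v 1)) := by
              refine Finset.sum_congr rfl fun w _ => ?_
              rw [hMcapp, inv_mul_cancel_left, Rpi_mul, ← Matrix.mulVec_mulVec, mulVec2]
          _ = (Rpi π g) i 0 * (∑ w : Dic A y hy, ((dP w : ℕ) : ℂ) * ((Rpi π w).mulVec v 0))
              + (Rpi π g) i 1 * (∑ w : Dic A y hy, ((dP w : ℕ) : ℂ) * ((Rpi π w).mulVec v 1)) := by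
              rw [Finset.mul_sum, Finset.mul_sum, ← Finset.sum_add_distrib]
              exact Finset.sum_congr rfl fun w _ => by ring
          _ = (Rpi π g) i 0 * (lam * v 0) + (Rpi π g) i 1 * (lam * v 1) := by
              rw [hwvec0 v, hwvec1 v, hv0, hv1]
          _ = lam * ((Rpi π g).mulVec v i) := by
              rw [mulVec2]
              ring
      have hmemE : ∀ (v : Fin 2 → ℂ) (kz : ℤ),
          α * v 0 + π y * β * v 1 = (kz : ℂ) * v 0 →
          β * v 0 + α * v 1 = (kz : ℂ) * v 1 →
          ∀ i : Fin 2, (fun g : Dic A y hy => (Rpi π g).mulVec v i) ∈ Evs :=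
        fun v kz hv0 hv1 i => ⟨kz, heig v _ hv0 hv1 i⟩
      obtain ⟨ka, hka⟩ := hαint
      obtain ⟨kb, hkb⟩ := hβint
      rcases hπy2 with hπy | hπy
      · -- π y = 1
        have hp := hmemE ![1, 1] (ka + kb)
          (by simp [hπy, hka, hkb] <;> push_cast <;> try ring)
          (by simp [hka, hkb] <;> push_cast <;> try ring)
        have hm := hmemE ![1, -1] (ka - kb)
          (by simp [hπy, hka, hkb] <;> push_cast <;> try ring)
          (by simp [hka, hkb] <;> push_cast <;> try ring)
        constructor
        · have hrepr : (fun g : Dic A y hy => if g.t then 0 else π g.a)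
              = (2⁻¹ : ℂ) • ((fun g : Dic A y hy => (Rpi π g).mulVec ![1, 1] 0)
                + fun g : Dic A y hy => (Rpi π g).mulVec ![1, -1] 0) := by
            funext g
            obtain ⟨t, a⟩ := g
            cases t
            · simp [Rpi_false, mulVec2]
              try ring
            · simp [Rpi_true, mulVec2]
              try ring
          rw [hrepr]
          exact Submodule.smul_mem _ _ (Submodule.add_mem _
            (Submodule.subset_span (hp 0)) (Submodule.subset_span (hm 0)))
        · have hrepr : (fun g : Dic A y hy => if g.t then π g.a else 0)
              = (2⁻¹ : ℂ) • ((fun g : Dic A y hy => (Rpi π g).mulVec ![1, 1] 1)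
                + fun g : Dic A y hy => (Rpi π g).mulVec ![1, -1] 1) := by
            funext g
            obtain ⟨t, a⟩ := g
            cases t
            · simp [Rpi_false, mulVec2]
              try ring
            · simp [Rpi_true, mulVec2]
              try ring
          rw [hrepr]
          exact Submodule.smul_mem _ _ (Submodule.add_mem _
            (Submodule.subset_span (hp 1)) (Submodule.subset_span (hm 1)))
      · -- π y = -1, hence β = 0
        have hβ0 : β = 0 := by
          have h2 : (-1 : ℂ) * β = β := by rw [← hπy]; exact hβy
          have h3 : (2 : ℂ) * β = 0 := by linear_combination -h2
          exact (mul_eq_zero.mp h3).resolve_left two_ne_zero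
        have hp := hmemE ![1, 0] ka
          (by simp [hβ0, hka])
          (by simp [hβ0])
        constructor
        · have hrepr : (fun g : Dic A y hy => if g.t then 0 else π g.a)
              = fun g : Dic A y hy => (Rpi π g).mulVec ![1, 0] 0 := by
            funext g
            obtain ⟨t, a⟩ := g
            cases t
            · simp [Rpi_false, mulVec2]
            · simp [Rpi_true, mulVec2]
          rw [hrepr]
          exact Submodule.subset_span (hp 0)
        · have hrepr : (fun g : Dic A y hy => if g.t then π g.a else 0)
              = fun g : Dic A y hy => (Rpi π g).mulVec ![1, 0] 1 := by
            funext g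
            obtain ⟨t, a⟩ := g
            cases t
            · simp [Rpi_false, mulVec2]
            · simp [Rpi_true, mulVec2]
          rw [hrepr]
          exact Submodule.subset_span (hp 1)
    -- the eigenfunctions span everything
    have hspan : Submodule.span ℂ Evs = ⊤ := by
      rw [eq_top_iff]
      rintro f -
      have hdecomp : f = (fun g : Dic A y hy => if g.t then 0 else f ⟨false, g.a⟩)
          + fun g : Dic A y hy => if g.t then f ⟨true, g.a⟩ else 0 := by
        funext g
        obtain ⟨t, a⟩ := g
        cases t <;> simp
      rw [hdecomp]
      have hhalf : ∀ uA : A → ℂ,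
          uA ∈ Submodule.span ℂ (Set.range (fun π : A →* ℂ => ⇑π)) →
          ((fun g : Dic A y hy => if g.t then 0 else uA g.a) ∈ Submodule.span ℂ Evs ∧
           (fun g : Dic A y hy => if g.t then uA g.a else 0) ∈ Submodule.span ℂ Evs) := by
        intro uA huA
        induction huA using Submodule.span_induction with
        | mem uA hm =>
          obtain ⟨π, rfl⟩ := hm
          exact hπblock π
        | zero =>
          constructor
          · have hz : (fun g : Dic A y hy => if g.t then 0 else (0 : A → ℂ) g.a)
                = 0 := by funext g; simp
            rw [hz]; exact Submodule.zero_mem _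
          · have hz : (fun g : Dic A y hy => if g.t then (0 : A → ℂ) g.a else 0)
                = 0 := by funext g; simp
            rw [hz]; exact Submodule.zero_mem _
        | add u₁ u₂ h₁ h₂ ih₁ ih₂ =>
          constructor
          · have hsum : (fun g : Dic A y hy => if g.t then 0 else (u₁ + u₂) g.a)
                = (fun g : Dic A y hy => if g.t then 0 else u₁ g.a)
                  + fun g : Dic A y hy => if g.t then 0 else u₂ g.a := by
              funext g; by_cases hgt : g.t <;> simp [hgt]
            rw [hsum]; exact Submodule.add_mem _ ih₁.1 ih₂.1
          · have hsum : (fun g : Dic A y hy => if g.t then (u₁ + u₂) g.a else 0)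
                = (fun g : Dic A y hy => if g.t then u₁ g.a else 0)
                  + fun g : Dic A y hy => if g.t then u₂ g.a else 0 := by
              funext g; by_cases hgt : g.t <;> simp [hgt]
            rw [hsum]; exact Submodule.add_mem _ ih₁.2 ih₂.2
        | smul c uA hm ih =>
          constructor
          · have hsm : (fun g : Dic A y hy => if g.t then 0 else (c • uA) g.a)
                = c • fun g : Dic A y hy => if g.t then 0 else uA g.a := by
              funext g; by_cases hgt : g.t <;> simp [hgt]
            rw [hsm]; exact Submodule.smul_mem _ _ ih.1
          · have hsm : (fun g : Dic A y hy => if g.t then (c • uA) g.a else 0)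
                = c • fun g : Dic A y hy => if g.t then uA g.a else 0 := by
              funext g; by_cases hgt : g.t <;> simp [hgt]
            rw [hsm]; exact Submodule.smul_mem _ _ ih.2
      refine Submodule.add_mem _ ?_ ?_
      · exact (hhalf (fun a => f ⟨false, a⟩) (by rw [char_span_top]; trivial)).1
      · exact (hhalf (fun a => f ⟨true, a⟩) (by rw [char_span_top]; trivial)).2
    -- orthogonality of u against every eigenfunction
    have horthE : ∀ f ∈ Evs, ∑ g : Dic A y hy, u g * f g = 0 := by
      rintro f ⟨kz, hkz⟩
      have hsym : ∑ g : Dic A y hy, u g * (Mc.mulVec f) g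
          = ∑ g : Dic A y hy, (Mc.mulVec u) g * f g := by
        calc ∑ g : Dic A y hy, u g * (Mc.mulVec f) g
            = ∑ g : Dic A y hy, ∑ h : Dic A y hy, u g * (Mc g h * f h) := by
              refine Finset.sum_congr rfl fun g _ => ?_
              rw [mulVec_apply, Finset.mul_sum]
          _ = ∑ h : Dic A y hy, ∑ g : Dic A y hy, u g * (Mc g h * f h) := Finset.sum_comm
          _ = ∑ h : Dic A y hy, (Mc.mulVec u) h * f h := by
              refine Finset.sum_congr rfl fun h _ => ?_
              rw [mulVec_apply, Finset.sum_mul]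
              refine Finset.sum_congr rfl fun g _ => ?_
              rw [hMcsym g h]
              ring
      rw [hkz, hueq] at hsym
      have hL : ∑ g : Dic A y hy, u g * ((kz : ℂ) • f) g
          = (kz : ℂ) * ∑ g : Dic A y hy, u g * f g := by
        rw [Finset.mul_sum]
        refine Finset.sum_congr rfl fun g _ => ?_
        simp only [Pi.smul_apply, smul_eq_mul]
        ring
      have hR : ∑ g : Dic A y hy, ((μ : ℂ) • u) g * f g
          = (μ : ℂ) * ∑ g : Dic A y hy, u g * f g := by
        rw [Finset.mul_sum]
        refine Finset.sum_congr rfl fun g _ => ?_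
        simp only [Pi.smul_apply, smul_eq_mul]
        ring
      rw [hL, hR] at hsym
      have hne : (kz : ℂ) ≠ (μ : ℂ) := by
        intro hEq
        apply hcon kz
        exact_mod_cast hEq
      have hz : ((kz : ℂ) - (μ : ℂ)) * ∑ g : Dic A y hy, u g * f g = 0 := by
        rw [sub_mul, hsym, sub_self]
      rcases mul_eq_zero.mp hz with h | h
      · exact absurd (sub_eq_zero.mp h) hne
      · exact h
    have horthspan : ∀ f ∈ Submodule.span ℂ Evs, ∑ g : Dic A y hy, u g * f g = 0 := by
      intro f hf
      induction hf using Submodule.span_induction with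
      | mem f hm => exact horthE f hm
      | zero => simp
      | add f₁ f₂ h₁ h₂ ih₁ ih₂ =>
        have hsum : ∑ g : Dic A y hy, u g * (f₁ + f₂) g
            = (∑ g : Dic A y hy, u g * f₁ g) + ∑ g : Dic A y hy, u g * f₂ g := by
          rw [← Finset.sum_add_distrib]
          exact Finset.sum_congr rfl fun g _ => by simp [mul_add]
        rw [hsum, ih₁, ih₂, add_zero]
      | smul c f hm ih =>
        have hsm : ∑ g : Dic A y hy, u g * (c • f) g
            = c * ∑ g : Dic A y hy, u g * f g := by
          rw [Finset.mul_sum]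
          refine Finset.sum_congr rfl fun g _ => ?_
          simp only [Pi.smul_apply, smul_eq_mul]
          ring
        rw [hsm, ih, mul_zero]
    refine hune (funext fun g₀ => ?_)
    have hval := horthspan (Pi.single g₀ 1) (by rw [hspan]; trivial)
    have : u g₀ = 0 := by
      rw [← hval]
      rw [Finset.sum_eq_single g₀
        (fun b _ hb => by simp [Pi.single_eq_of_ne hb])
        (fun h => absurd (Finset.mem_univ g₀) h)]
      simp
    simpa using this
end
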